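/- arXiv:1809.08837 — 6 statements merged into one kernel-verified Lean document; each statement's English description precedes it below -/
import Mathlib

section
/- Let v be a nonnegative random variable with values in [0,1] and let b⁻ be an independent nonnegative random variable with density g. For linear bids b(v) = α·v, the CPA (the ratio of expected cost to expected value) is non-decreasing in the bid multiplier: for 0 < α₁ ≤ α₂, E[b⁻·1{b⁻ < α₁v}] / E[v·1{b⁻ < α₁v}] ≤ E[b⁻·1{b⁻ < α₂v}] / E[v·1{b⁻ < α₂v}], whenever both denominators are positive. -/
open MeasureTheory ProbabilityTheory Set

/-- **CPA monotony.** For a value `v ∈ [0,1]` and an independent nonnegative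
price to beat `bm` with density `g`, when the buyer bids linearly `b(v) = α·v`
the CPA (ratio of expected payment to expected earned value) is non-decreasing
in the bid multiplier `α`, whenever both denominators are positive. -/
theorem cpa_monotone_in_bid_multiplier
    {Ω : Type*} [MeasureSpace Ω] [IsProbabilityMeasure (ℙ : Measure Ω)]
    (v bm : Ω → ℝ) (hv : Measurable v) (hbm : Measurable bm)
    (hv01 : ∀ ω, v ω ∈ Icc (0:ℝ) 1) (hbm0 : ∀ ω, 0 ≤ bm ω)
    (hindep : IndepFun v bm ℙ)
    (g : ℝ → ℝ)
    (hdens : (ℙ : Measure Ω).map bm = volume.withDensity (fun x => ENNReal.ofReal (g x)))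
    (α₁ α₂ : ℝ) (h1 : 0 < α₁) (h12 : α₁ ≤ α₂)
    (hd1 : 0 < ∫ ω, (if bm ω < α₁ * v ω then v ω else 0) ∂ℙ)
    (hd2 : 0 < ∫ ω, (if bm ω < α₂ * v ω then v ω else 0) ∂ℙ) :
    (∫ ω, (if bm ω < α₁ * v ω then bm ω else 0) ∂ℙ)
        / (∫ ω, (if bm ω < α₁ * v ω then v ω else 0) ∂ℙ)
      ≤ (∫ ω, (if bm ω < α₂ * v ω then bm ω else 0) ∂ℙ)
        / (∫ ω, (if bm ω < α₂ * v ω then v ω else 0) ∂ℙ) := by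
  have hα₂ : 0 < α₂ := h1.trans_le h12
  -- measurability of the win sets
  have hmS : ∀ α : ℝ, MeasurableSet {ω | bm ω < α * v ω} := fun α =>
    measurableSet_lt hbm (hv.const_mul α)
  -- integrability helper: bounded measurable functions are integrable
  have hint : ∀ (f : Ω → ℝ) (C : ℝ), Measurable f → (∀ ω, |f ω| ≤ C) →
      Integrable f ℙ := by
    intro f C hf hb
    exact (integrable_const C).mono' hf.aestronglyMeasurable
      (Filter.Eventually.of_forall fun ω => by simpa using hb ω)
  have hintg : ∀ α : ℝ, 0 < α → Integrable (fun ω => if bm ω < α * v ω then bm ω else 0) ℙ := by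
    intro α hα
    refine hint _ α (Measurable.ite (hmS α) hbm measurable_const) fun ω => ?_
    by_cases h : bm ω < α * v ω
    · simp only [h, if_true]
      rw [abs_of_nonneg (hbm0 ω)]
      calc bm ω ≤ α * v ω := le_of_lt h
        _ ≤ α * 1 := by nlinarith [(hv01 ω).2]
        _ = α := mul_one α
    · simp [h, le_of_lt hα]
  have hintf : ∀ α : ℝ, Integrable (fun ω => if bm ω < α * v ω then v ω else 0) ℙ := by
    intro α
    refine hint _ 1 (Measurable.ite (hmS α) hv measurable_const) fun ω => ?_
    by_cases h : bm ω < α * v ω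
    · simp only [h, if_true]
      rw [abs_of_nonneg (hv01 ω).1]; exact (hv01 ω).2
    · simp [h]
  have ig1 := hintg α₁ h1
  have ig2 := hintg α₂ hα₂
  have if1 := hintf α₁
  have if2 := hintf α₂
  set N₁ := ∫ ω, (if bm ω < α₁ * v ω then bm ω else 0) ∂ℙ with hN₁
  set N₂ := ∫ ω, (if bm ω < α₂ * v ω then bm ω else 0) ∂ℙ with hN₂
  set D₁ := ∫ ω, (if bm ω < α₁ * v ω then v ω else 0) ∂ℙ with hD₁
  set D₂ := ∫ ω, (if bm ω < α₂ * v ω then v ω else 0) ∂ℙ with hD₂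
  -- S₁ ⊆ S₂ pointwise
  have hsub : ∀ ω, bm ω < α₁ * v ω → bm ω < α₂ * v ω := by
    intro ω h
    have hv0 := (hv01 ω).1
    nlinarith
  -- (a) N₁ ≤ α₁ * D₁
  have ha : N₁ ≤ α₁ * D₁ := by
    rw [hN₁, hD₁, ← integral_const_mul]
    refine integral_mono ig1 (if1.const_mul α₁) fun ω => ?_
    by_cases h : bm ω < α₁ * v ω <;> simp [h, le_of_lt, le_refl]
  -- (c) D₁ ≤ D₂
  have hc : D₁ ≤ D₂ := by
    rw [hD₁, hD₂]
    refine integral_mono if1 if2 fun ω => ?_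
    by_cases h : bm ω < α₁ * v ω
    · simp [h, hsub ω h]
    · by_cases h2 : bm ω < α₂ * v ω <;> simp [h, h2, (hv01 ω).1]
  -- (b) α₁ * (D₂ - D₁) ≤ N₂ - N₁
  have hb : α₁ * (D₂ - D₁) ≤ N₂ - N₁ := by
    rw [hN₁, hN₂, hD₁, hD₂, ← integral_sub if2 if1, ← integral_sub ig2 ig1,
      ← integral_const_mul]
    refine integral_mono ((if2.sub if1).const_mul α₁) (ig2.sub ig1) fun ω => ?_
    simp only
    by_cases h : bm ω < α₁ * v ω
    · simp [h, hsub ω h]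
    · by_cases h2 : bm ω < α₂ * v ω
      · simp only [h, h2, if_true, if_false, sub_zero]
        exact le_of_not_gt h
      · simp [h, h2]
  rw [div_le_div_iff₀ hd1 hd2]
  nlinarith [mul_le_mul_of_nonneg_right ha (sub_nonneg.2 hc),
    mul_le_mul_of_nonneg_right hb (le_of_lt hd1)]
end

section
/- Let v₁, …, vₙ (n ≥ 2) be i.i.d. nonnegative random variables with common atomless distribution F and finite expectation, let v = vₙ and Y = max(v₁, …, vₙ₋₁), and let Mₖ denote the maximum of k i.i.d. draws from F. Then E[Y·1{v > Y}] = E[Mₙ₋₁] − ((n−1)/n)·E[Mₙ]. -/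
open MeasureTheory ProbabilityTheory Set


private lemma measurable_fold_max {n : ℕ} (s : Finset (Fin n)) :
    Measurable (fun x : Fin n → ℝ => s.fold max 0 x) := by
  classical
  induction s using Finset.induction_on with
  | empty => simpa using measurable_const
  | @insert a s ha ih =>
      simp only [Finset.fold_insert ha]
      exact (measurable_pi_apply a).max ih

private lemma fold_max_nonneg {n : ℕ} (s : Finset (Fin n)) (f : Fin n → ℝ) :
    0 ≤ s.fold max 0 f :=
  (Finset.le_fold_max _).2 (Or.inl le_rfl)

private lemma sum_if_strict_max {n : ℕ} (x : Fin n → ℝ)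
    (hdist : ∀ i j : Fin n, i ≠ j → x i ≠ x j) :
    (∑ i : Fin n, if (Finset.univ.erase i).fold max 0 x < x i then x i else 0)
      = Finset.univ.fold max 0 x := by
  classical
  by_cases hex : ∃ i : Fin n, (Finset.univ.erase i).fold max 0 x < x i
  · obtain ⟨i, hi⟩ := hex
    have hothers : ∀ j : Fin n, j ≠ i → ¬ ((Finset.univ.erase j).fold max 0 x < x j) := by
      intro j hj
      have hji : x j ≤ (Finset.univ.erase i).fold max 0 x :=
        (Finset.le_fold_max _).2 (Or.inr ⟨j, Finset.mem_erase.2 ⟨hj, Finset.mem_univ j⟩, le_rfl⟩)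
      have hij : x i ≤ (Finset.univ.erase j).fold max 0 x :=
        (Finset.le_fold_max _).2 (Or.inr ⟨i, Finset.mem_erase.2 ⟨Ne.symm hj, Finset.mem_univ i⟩, le_rfl⟩)
      exact not_lt.2 ((hji.trans_lt hi).trans_le hij).le
    rw [Finset.sum_eq_single_of_mem i (Finset.mem_univ i)]
    · rw [if_pos hi]
      have huniv : Finset.univ.fold max 0 x = max (x i) ((Finset.univ.erase i).fold max 0 x) := by
        conv_lhs => rw [← Finset.insert_erase (Finset.mem_univ i)]
        rw [Finset.fold_insert (Finset.notMem_erase i _)]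
      rw [huniv, max_eq_left hi.le]
    · intro j _ hj
      rw [if_neg (hothers j hj)]
  · push_neg at hex
    have hsum : (∑ i : Fin n, if (Finset.univ.erase i).fold max 0 x < x i then x i else 0) = 0 :=
      Finset.sum_eq_zero fun i _ => if_neg (not_lt.2 (hex i))
    have h0 : (0:ℝ) ≤ Finset.univ.fold max 0 x := fold_max_nonneg _ _
    rcases h0.lt_or_eq with h | h
    · exfalso
      obtain (h0' | ⟨i, _, hi⟩) := (Finset.le_fold_max _).1 (le_refl (Finset.univ.fold max 0 x))
      · exact absurd h0' (not_le.2 h)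
      · have hxi : x i = Finset.univ.fold max 0 x :=
          le_antisymm ((Finset.le_fold_max _).2 (Or.inr ⟨i, Finset.mem_univ i, le_rfl⟩)) hi
        have hle : x i ≤ (Finset.univ.erase i).fold max 0 x := hex i
        obtain (h1 | ⟨j, hj, hj2⟩) := (Finset.le_fold_max _).1 hle
        · rw [hxi] at h1; exact absurd h1 (not_le.2 h)
        · have hj3 : x j ≤ Finset.univ.fold max 0 x :=
            (Finset.le_fold_max _).2 (Or.inr ⟨j, Finset.mem_univ j, le_rfl⟩)
          have : x j = x i := le_antisymm (hj3.trans hxi.ge) hj2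
          exact hdist j i (Finset.mem_erase.1 hj).1 this
    · rw [hsum, ← h]

private lemma fold_max_erase_swap {n : ℕ} (x : Fin n → ℝ) (e : Equiv.Perm (Fin n)) (a : Fin n) :
    (Finset.univ.erase (e a)).fold max 0 x
      = (Finset.univ.erase a).fold max 0 (fun j => x (e j)) := by
  classical
  have himg : (Finset.univ.erase a).image e = Finset.univ.erase (e a) := by
    rw [Finset.image_erase e.injective]
    congr 1
    exact Finset.image_univ_equiv e
  rw [← himg, Finset.fold_image]
  · rfl
  · intro i _ j _ h
    exact e.injective h

private lemma measure_eq_zero_of_indep {Ω : Type*} [MeasureSpace Ω]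
    [IsProbabilityMeasure (ℙ : Measure Ω)]
    {f g : Ω → ℝ} (hf : Measurable f) (hg : Measurable g) (h : IndepFun f g ℙ)
    (hg0 : ∀ x : ℝ, ℙ {ω | g ω = x} = 0) : ℙ {ω | f ω = g ω} = 0 := by
  have hmap : (ℙ : Measure Ω).map (fun ω => (f ω, g ω)) = ((ℙ : Measure Ω).map f).prod ((ℙ : Measure Ω).map g) :=
    (indepFun_iff_map_prod_eq_prod_map_map hf.aemeasurable hg.aemeasurable).1 h
  have hD : MeasurableSet {p : ℝ × ℝ | p.1 = p.2} :=
    measurableSet_eq_fun measurable_fst measurable_snd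
  have hset : {ω | f ω = g ω} = (fun ω => (f ω, g ω)) ⁻¹' {p : ℝ × ℝ | p.1 = p.2} := rfl
  rw [hset, ← Measure.map_apply (hf.prodMk hg) hD, hmap, Measure.prod_apply hD]
  have hsec : ∀ x : ℝ, ((ℙ : Measure Ω).map g) ({x} : Set ℝ) = 0 := by
    intro x
    rw [Measure.map_apply hg (measurableSet_singleton x)]
    exact hg0 x
  simp [hsec]

/-- **Expected second-price payment at a symmetric profile.**  For `n = m + 1 ≥ 2`
i.i.d. nonnegative values with an atomless common distribution and finite
expectation, with `v` the last value, `Y` the maximum of the other `n − 1`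
values (so `E[Y] = E[Mₙ₋₁]`) and `M` the maximum of all `n` values
(so `E[M] = E[Mₙ]`), one has `E[Y·1{v > Y}] = E[Mₙ₋₁] − ((n−1)/n)·E[Mₙ]`. -/
theorem expected_payment_eq_order_statistics
    {Ω : Type*} [MeasureSpace Ω] [IsProbabilityMeasure (ℙ : Measure Ω)]
    (m : ℕ) (hm : 1 ≤ m)
    (v : Fin (m + 1) → Ω → ℝ)
    (hmeas : ∀ i, Measurable (v i))
    (hnn : ∀ i ω, 0 ≤ v i ω)
    (hindep : iIndepFun v ℙ)
    (hid : ∀ i j, IdentDistrib (v i) (v j) ℙ ℙ)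
    (hatomless : ∀ i (x : ℝ), ℙ {ω | v i ω = x} = 0)
    (hint : ∀ i, Integrable (v i) ℙ)
    (Y M : Ω → ℝ)
    (hY : ∀ ω, Y ω = (Finset.univ.erase (Fin.last m)).fold max 0 (fun i => v i ω))
    (hM : ∀ ω, M ω = Finset.univ.fold max 0 (fun i => v i ω)) :
    (∫ ω, (if Y ω < v (Fin.last m) ω then Y ω else 0) ∂ℙ)
      = (∫ ω, Y ω ∂ℙ) - ((m : ℝ) / (m + 1)) * ∫ ω, M ω ∂ℙ := by
  classical
  set lst := Fin.last m with hlst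
  set μ := (ℙ : Measure Ω).map (v lst) with hμ
  haveI : IsProbabilityMeasure μ := Measure.isProbabilityMeasure_map (hmeas lst).aemeasurable
  have hμi : ∀ i, (ℙ : Measure Ω).map (v i) = μ := fun i => (hid i lst).map_eq
  set Vec : Ω → (Fin (m+1) → ℝ) := fun ω i => v i ω with hVec
  have hVecMeas : Measurable Vec := measurable_pi_lambda _ hmeas
  -- the joint law is the product measure
  have hlaw : (ℙ : Measure Ω).map Vec = Measure.pi (fun _ : Fin (m+1) => μ) := by
    refine (Measure.pi_eq fun s hs => ?_).symm
    rw [Measure.map_apply hVecMeas (MeasurableSet.univ_pi hs)]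
    have hpre : Vec ⁻¹' (Set.pi Set.univ s) = ⋂ i, v i ⁻¹' s i := by
      ext ω; simp [hVec, Set.mem_pi]
    have hsi : ∀ i, ℙ (v i ⁻¹' s i) = μ (s i) := fun i =>
      calc ℙ (v i ⁻¹' s i) = ((ℙ : Measure Ω).map (v i)) (s i) :=
            (Measure.map_apply (hmeas i) (hs i)).symm
        _ = μ (s i) := by rw [hμi i]
    calc ℙ (Vec ⁻¹' Set.pi Set.univ s) = ∏ i, ℙ (v i ⁻¹' s i) := by
          rw [hpre]
          simpa using
            (iIndepFun_iff_measure_inter_preimage_eq_mul.1 hindep) Finset.univ (fun i _ => hs i)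
      _ = ∏ i, μ (s i) := Finset.prod_congr rfl fun i _ => hsi i
  -- the "winner payment" functions
  set F : Fin (m+1) → (Fin (m+1) → ℝ) → ℝ :=
    fun i x => if (Finset.univ.erase i).fold max 0 x < x i then x i else 0 with hF
  have hFmeas : ∀ i, Measurable (F i) := fun i =>
    Measurable.ite (measurableSet_lt (measurable_fold_max _) (measurable_pi_apply i))
      (measurable_pi_apply i) measurable_const
  -- exchangeability: all F i have the same integral against the product law
  have hFint_eq : ∀ i, ∫ x, F i x ∂(Measure.pi fun _ : Fin (m+1) => μ)
      = ∫ x, F lst x ∂(Measure.pi fun _ : Fin (m+1) => μ) := by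
    intro i
    set e : Equiv.Perm (Fin (m+1)) := Equiv.swap lst i with he
    have hmp : MeasurePreserving (MeasurableEquiv.piCongrLeft (fun _ : Fin (m+1) => ℝ) e)
        (Measure.pi fun _ : Fin (m+1) => μ) (Measure.pi fun _ : Fin (m+1) => μ) :=
      measurePreserving_piCongrLeft (fun _ => μ) e
    rw [← hmp.integral_comp (MeasurableEquiv.measurableEmbedding _) (F lst)]
    refine integral_congr_ae (ae_of_all _ fun x => ?_)
    have hT : ∀ j, (MeasurableEquiv.piCongrLeft (fun _ : Fin (m+1) => ℝ) e) x j = x (e j) := by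
      intro j
      have h1 : (MeasurableEquiv.piCongrLeft (fun _ : Fin (m+1) => ℝ) e) x (e (e j)) = x (e j) := by
        rw [MeasurableEquiv.coe_piCongrLeft]
        exact Equiv.piCongrLeft_apply_apply (fun _ : Fin (m+1) => ℝ) e x (e j)
      simpa [he, Equiv.swap_apply_self] using h1
    have hTx : ⇑(MeasurableEquiv.piCongrLeft (fun _ : Fin (m+1) => ℝ) e) x = fun j => x (e j) :=
      funext hT
    simp only [hF, hTx]
    rw [← fold_max_erase_swap x e lst]
    have helst : e lst = i := Equiv.swap_apply_left lst i
    rw [helst]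
  -- transfer integrals from Ω to the product space
  have htrans : ∀ i, ∫ ω, F i (Vec ω) ∂ℙ
      = ∫ x, F i x ∂(Measure.pi fun _ : Fin (m+1) => μ) := by
    intro i
    rw [← hlaw]
    exact (integral_map hVecMeas.aemeasurable (hFmeas i).aestronglyMeasurable).symm
  -- integrability
  have hS : Integrable (fun ω => ∑ i, v i ω) ℙ := integrable_finset_sum _ fun i _ => hint i
  have hSnn : ∀ ω, 0 ≤ ∑ i, v i ω := fun ω => Finset.sum_nonneg fun i _ => hnn i ω
  have hfoldle : ∀ (s : Finset (Fin (m+1))) ω, s.fold max 0 (fun j => v j ω) ≤ ∑ i, v i ω :=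
    fun s ω => (Finset.fold_max_le _).2
      ⟨hSnn ω, fun j _ => Finset.single_le_sum (fun k _ => hnn k ω) (Finset.mem_univ j)⟩
  have hPint : ∀ i, Integrable (fun ω => F i (Vec ω)) ℙ := by
    intro i
    refine hS.mono ((hFmeas i).comp hVecMeas).aestronglyMeasurable (ae_of_all _ fun ω => ?_)
    simp only [hF, hVec]
    rw [Real.norm_eq_abs, Real.norm_eq_abs, abs_of_nonneg (hSnn ω)]
    split
    · rw [abs_of_nonneg (hnn i ω)]
      exact Finset.single_le_sum (fun k _ => hnn k ω) (Finset.mem_univ i)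
    · simpa using hSnn ω
  have hYmeas : Measurable Y := by
    have hYe : Y = (fun x : Fin (m+1) → ℝ => (Finset.univ.erase lst).fold max 0 x) ∘ Vec :=
      funext fun ω => hY ω
    rw [hYe]; exact (measurable_fold_max _).comp hVecMeas
  have hMmeas : Measurable M := by
    have hMe : M = (fun x : Fin (m+1) → ℝ => Finset.univ.fold max 0 x) ∘ Vec :=
      funext fun ω => hM ω
    rw [hMe]; exact (measurable_fold_max _).comp hVecMeas
  have hYint : Integrable Y ℙ := by
    refine hS.mono hYmeas.aestronglyMeasurable (ae_of_all _ fun ω => ?_)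
    rw [Real.norm_eq_abs, Real.norm_eq_abs, abs_of_nonneg (hSnn ω), hY ω,
      abs_of_nonneg (fold_max_nonneg _ _)]
    exact hfoldle _ ω
  have hMint : Integrable M ℙ := by
    refine hS.mono hMmeas.aestronglyMeasurable (ae_of_all _ fun ω => ?_)
    rw [Real.norm_eq_abs, Real.norm_eq_abs, abs_of_nonneg (hSnn ω), hM ω,
      abs_of_nonneg (fold_max_nonneg _ _)]
    exact hfoldle _ ω
  -- a.e. there are no ties
  have hne : ∀ᵐ ω ∂ℙ, ∀ i j : Fin (m+1), i ≠ j → v i ω ≠ v j ω := by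
    rw [ae_all_iff]
    intro i
    rw [ae_all_iff]
    intro j
    by_cases hij : i = j
    · exact ae_of_all _ fun ω h => absurd hij h
    · have h0 : ℙ {ω | v i ω = v j ω} = 0 :=
        measure_eq_zero_of_indep (hmeas i) (hmeas j) (hindep.indepFun hij) (hatomless j)
      have : ∀ᵐ ω ∂ℙ, ¬ (v i ω = v j ω) := by
        rw [ae_iff]; simpa using h0
      exact this.mono fun ω h _ => h
  have h0ne : ∀ᵐ ω ∂ℙ, v lst ω ≠ 0 := by
    rw [ae_iff]; simpa using hatomless lst 0
  -- sum over i of the payments equals the maximum a.e.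
  have h2 : ∑ i, ∫ ω, F i (Vec ω) ∂ℙ = ∫ ω, M ω ∂ℙ := by
    rw [← integral_finset_sum _ (fun i _ => hPint i)]
    refine integral_congr_ae ?_
    filter_upwards [hne] with ω hω
    rw [hM ω]
    exact sum_if_strict_max (fun i => v i ω) (fun i j hij => hω i j hij)
  have h3 : ((m : ℝ) + 1) * ∫ ω, F lst (Vec ω) ∂ℙ = ∫ ω, M ω ∂ℙ := by
    rw [← h2]
    have hall : ∀ i, ∫ ω, F i (Vec ω) ∂ℙ = ∫ ω, F lst (Vec ω) ∂ℙ := fun i => by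
      rw [htrans i, htrans lst, hFint_eq i]
    rw [Finset.sum_congr rfl fun i _ => hall i, Finset.sum_const, Finset.card_univ,
      Fintype.card_fin, nsmul_eq_mul]
    push_cast
    ring
  -- pointwise decomposition a.e.
  have hae : ∀ᵐ ω ∂ℙ, (if Y ω < v lst ω then Y ω else 0) = Y ω + F lst (Vec ω) - M ω := by
    filter_upwards [hne, h0ne] with ω hω h0
    have hYω : Y ω = (Finset.univ.erase lst).fold max 0 (fun i => v i ω) := hY ω
    have hMω : M ω = max (v lst ω) (Y ω) := by
      rw [hM ω, ← Finset.insert_erase (Finset.mem_univ lst),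
        Finset.fold_insert (Finset.notMem_erase _ _), ← hYω]
    have hYne : Y ω ≠ v lst ω := by
      intro hEq
      rcases (fold_max_nonneg (Finset.univ.erase lst) (fun i => v i ω)).lt_or_eq with hpos | hzero
      · obtain (h' | ⟨j, hj, hj2⟩) := (Finset.le_fold_max _).1 (le_of_eq hYω)
        · rw [hYω] at h'; exact absurd h' (not_le.2 hpos)
        · have hj3 : v j ω ≤ Y ω := by
            rw [hYω]
            exact (Finset.le_fold_max _).2 (Or.inr ⟨j, hj, le_rfl⟩)
          have hjeq : v j ω = v lst ω := by
            have hvj : v j ω = Y ω := le_antisymm hj3 hj2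
            rw [hvj]; exact hEq
          exact hω j lst (Finset.mem_erase.1 hj).1 hjeq
      · exact h0 (by rw [← hEq, hYω, ← hzero])
    have hP : F lst (Vec ω) = if Y ω < v lst ω then v lst ω else 0 := by
      simp only [hF, hVec]
      rw [← hYω]
    rcases lt_or_gt_of_ne hYne with hlt | hgt
    · rw [if_pos hlt, hP, if_pos hlt, hMω, max_eq_left hlt.le]; ring
    · rw [if_neg (not_lt.2 hgt.le), hP, if_neg (not_lt.2 hgt.le), hMω, max_eq_right hgt.le]; ring
  -- put everything together
  have hm1 : ((m : ℝ) + 1) ≠ 0 := by positivity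
  calc ∫ ω, (if Y ω < v lst ω then Y ω else 0) ∂ℙ
      = ∫ ω, (Y ω + F lst (Vec ω) - M ω) ∂ℙ := integral_congr_ae hae
    _ = (∫ ω, Y ω ∂ℙ) + (∫ ω, F lst (Vec ω) ∂ℙ) - ∫ ω, M ω ∂ℙ := by
        have hYP : Integrable (fun ω => Y ω + F lst (Vec ω)) ℙ := hYint.add (hPint lst)
        rw [integral_sub hYP hMint, integral_add hYint (hPint lst)]
    _ = (∫ ω, Y ω ∂ℙ) - ((m : ℝ) / (m + 1)) * ∫ ω, M ω ∂ℙ := by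
        have hFlst : ∫ ω, F lst (Vec ω) ∂ℙ = (∫ ω, M ω ∂ℙ) / ((m : ℝ) + 1) := by
          field_simp
          linarith [h3]
        rw [hFlst]
        field_simp
        ring
end

section
/- Let v₁, …, vₙ (n ≥ 2) be i.i.d. nonnegative random variables with common atomless distribution F, finite positive expectation of the maximum, let v = vₙ, Y = max(v₁, …, vₙ₋₁), Mₖ the maximum of k i.i.d. draws from F, and define the competition factor γ(F,n) = n·(E[Mₙ₋₁]/E[Mₙ] − (n−1)/n). Then the ratio of a bidder's expected second-price payment to his expected earned value under symmetric linear bidding equals γ(F,n): E[Y·1{v > Y}] / E[v·1{v > Y}] = γ(F,n). Consequently, when all n bidders with CPA target T > 0 use the bid b*(v) = (T/γ(F,n))·v, each bidder's CPA constraint E[payment] ≤ T·E[earned value] binds with equality. -/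
open MeasureTheory ProbabilityTheory Set
open scoped ENNReal

lemma measurable_fold_max_s7 {α : Type*} [MeasurableSpace α] {ι : Type*} [DecidableEq ι]
    (s : Finset ι) (f : ι → α → ℝ) (hf : ∀ i, Measurable (f i)) :
    Measurable (fun a => s.fold max (0:ℝ) (fun i => f i a)) := by
  classical
  induction s using Finset.induction_on with
  | empty => simp only [Finset.fold_empty]; exact measurable_const
  | @insert a s ha ih =>
      simp only [Finset.fold_insert ha]
      exact (hf a).max ih

lemma joint_eq_pi {Ω : Type*} [MeasureSpace Ω] [IsProbabilityMeasure (ℙ : Measure Ω)]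
    {n : ℕ} (v : Fin n → Ω → ℝ) (hmeas : ∀ i, Measurable (v i))
    (hindep : iIndepFun v ℙ) :
    Measure.map (fun ω i => v i ω) ℙ = Measure.pi (fun i => Measure.map (v i) ℙ) := by
  symm
  apply Measure.pi_eq
  intro s hs
  rw [Measure.map_apply (measurable_pi_lambda _ hmeas) (MeasurableSet.univ_pi hs)]
  have hpre : (fun ω i => v i ω) ⁻¹' (Set.pi Set.univ s) = ⋂ i ∈ Finset.univ, v i ⁻¹' s i := by
    ext ω; simp [Set.mem_pi]
  rw [hpre, hindep.measure_inter_preimage_eq_mul Finset.univ (fun i _ => hs i)]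
  exact Finset.prod_congr rfl fun i _ => (Measure.map_apply (hmeas i) (hs i)).symm

lemma map_perm_pi {n : ℕ} (ν : Measure ℝ) [IsProbabilityMeasure ν] (e : Fin n ≃ Fin n) :
    Measure.map (fun x : Fin n → ℝ => x ∘ e) (Measure.pi fun _ => ν) = Measure.pi fun _ => ν := by
  have h := MeasureTheory.measurePreserving_piCongrLeft (fun _ : Fin n => ν) e.symm
  have hco : ⇑(MeasurableEquiv.piCongrLeft (fun _ : Fin n => ℝ) e.symm)
      = fun x : Fin n → ℝ => x ∘ e := by
    funext x
    funext j
    have h2 := Equiv.piCongrLeft_apply_apply (fun _ : Fin n => ℝ) e.symm x (e j)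
    simp only [Equiv.symm_apply_apply] at h2
    simpa [MeasurableEquiv.coe_piCongrLeft] using h2
  rw [← hco]
  exact h.map_eq

lemma exists_good_intervals (ν : Measure ℝ) [IsProbabilityMeasure ν]
    (hν : ∀ x : ℝ, ν {x} = 0) {c : ℝ} (hc : 0 < c) (hp : 0 < ν (Ioi c)) :
    ∃ a b : ℝ, 0 < a ∧ a < b ∧ 0 < ν (Ioc a b) ∧ 0 < ν (Ioi b) := by
  classical
  set Zs : Set ℝ := {t | ν (Ioi t) = 0} with hZs
  by_cases hZ : Zs.Nonempty
  · have hsub : Zs ⊆ Ioi c := by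
      intro t ht
      by_contra h
      rw [mem_Ioi] at h
      have hle : ν (Ioi c) ≤ ν (Ioi t) := measure_mono (Ioi_subset_Ioi (not_lt.mp h))
      rw [ht] at hle
      exact absurd (le_antisymm hle zero_le) (ne_of_gt hp)
    have bdd : BddBelow Zs := ⟨c, fun t ht => (hsub ht).le⟩
    set b0 := sInf Zs with hb0
    have hb0c : c ≤ b0 := le_csInf hZ fun t ht => (hsub ht).le
    have hIoi_b0 : ν (Ioi b0) = 0 := by
      have hU : Ioi b0 ⊆ ⋃ n : ℕ, Ioi (b0 + 1 / (n + 1)) := by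
        intro x hx
        obtain ⟨n, hn⟩ := exists_nat_one_div_lt (sub_pos.mpr (show b0 < x from hx) : (0:ℝ) < x - b0)
        exact mem_iUnion.mpr ⟨n, by simp only [mem_Ioi]; linarith [hn]⟩
      refine le_antisymm (le_trans (measure_mono hU)
        (le_of_eq (measure_iUnion_null ?_))) zero_le
      intro n
      have hlt : b0 < b0 + 1 / ((n : ℝ) + 1) := by
        have : (0:ℝ) < 1 / ((n : ℝ) + 1) := by positivity
        linarith
      obtain ⟨t', ht', ht'lt⟩ := exists_lt_of_csInf_lt hZ hlt
      exact le_antisymm (le_trans (measure_mono (Ioi_subset_Ioi ht'lt.le))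
        (le_of_eq ht')) zero_le
    have hIci : ν (Ici b0) = 0 := by
      have hset : Ici b0 = {b0} ∪ Ioi b0 := by
        ext x; simp [le_iff_lt_or_eq, or_comm, eq_comm]
      rw [hset]
      refine le_antisymm (le_trans (measure_union_le _ _) ?_) zero_le
      rw [hν b0, hIoi_b0]; simp
    have hoo : 0 < ν (Ioo c b0) := by
      have hsub2 : Ioi c ⊆ Ioo c b0 ∪ Ici b0 := by
        intro x hx
        rcases lt_or_ge x b0 with h | h
        · exact Or.inl ⟨hx, h⟩
        · exact Or.inr h
      have h1 : ν (Ioi c) ≤ ν (Ioo c b0) + ν (Ici b0) :=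
        le_trans (measure_mono hsub2) (measure_union_le _ _)
      rw [hIci, add_zero] at h1
      exact lt_of_lt_of_le hp h1
    have hcb0 : c < b0 := by
      by_contra h
      push_neg at h
      rw [Ioo_eq_empty (not_lt.mpr h)] at hoo
      simp at hoo
    have hU2 : Ioo c b0 ⊆ ⋃ n : ℕ, Ioc c (b0 - (b0 - c) / ((n : ℝ) + 2)) := by
      rintro x ⟨hx1, hx2⟩
      have hbx : 0 < b0 - x := sub_pos.mpr hx2
      obtain ⟨n, hn⟩ := exists_nat_gt ((b0 - c) / (b0 - x))
      refine mem_iUnion.mpr ⟨n, hx1, ?_⟩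
      have h2 : (b0 - c) / ((n : ℝ) + 2) ≤ b0 - x := by
        rw [div_le_iff₀ (by positivity)]
        have h3 : b0 - c < (n : ℝ) * (b0 - x) := (div_lt_iff₀ hbx).mp hn
        nlinarith
      linarith
    have hex : ∃ n : ℕ, ν (Ioc c (b0 - (b0 - c) / ((n : ℝ) + 2))) ≠ 0 := by
      by_contra h
      push_neg at h
      have := le_trans (measure_mono hU2) (le_of_eq (measure_iUnion_null h))
      exact absurd (le_antisymm this zero_le) (ne_of_gt hoo)
    obtain ⟨n, hn⟩ := hex
    set b := b0 - (b0 - c) / ((n : ℝ) + 2) with hbdef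
    have hsmall : 0 < (b0 - c) / ((n : ℝ) + 2) := div_pos (by linarith) (by positivity)
    have hblt : b < b0 := by rw [hbdef]; linarith
    have hcb : c < b := by
      rw [hbdef]
      have : (b0 - c) / ((n : ℝ) + 2) < b0 - c :=
        div_lt_self (by linarith) (by have := Nat.cast_nonneg (α := ℝ) n; linarith)
      linarith
    refine ⟨c, b, hc, hcb, pos_iff_ne_zero.mpr hn, ?_⟩
    rcases eq_or_lt_of_le (zero_le : 0 ≤ ν (Ioi b)) with h | h
    · exact absurd (csInf_le bdd h.symm) (not_le.mpr hblt)
    · exact h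
  · have hpos : ∀ t : ℝ, 0 < ν (Ioi t) := by
      intro t
      rcases eq_or_lt_of_le (zero_le : 0 ≤ ν (Ioi t)) with h | h
      · exact absurd ⟨t, h.symm⟩ hZ
      · exact h
    have hU : Ioi c ⊆ ⋃ n : ℕ, Ioc c (c + n + 1) := by
      intro x hx
      obtain ⟨n, hn⟩ := exists_nat_gt (x - c)
      exact mem_iUnion.mpr ⟨n, hx, by linarith⟩
    have hex : ∃ n : ℕ, ν (Ioc c (c + n + 1)) ≠ 0 := by
      by_contra h
      push_neg at h
      have := le_trans (measure_mono hU) (le_of_eq (measure_iUnion_null h))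
      exact absurd (le_antisymm this zero_le) (ne_of_gt hp)
    obtain ⟨n, hn⟩ := hex
    refine ⟨c, c + n + 1, hc, ?_, pos_iff_ne_zero.mpr hn, hpos _⟩
    have : (0:ℝ) ≤ (n:ℝ) := Nat.cast_nonneg n
    linarith

/-- **The competition factor is the equilibrium cost/value ratio, and the
equilibrium bid `b⋆(v) = (T/γ)·v` makes the CPA constraint bind.**
For `n = m + 1 ≥ 2` i.i.d. nonnegative values with an atomless common
distribution and finite positive expected maximum, let `v` be the last value,
`Y` the maximum of the other `n − 1` values (`E[Y] = E[Mₙ₋₁]`), `M` the maximum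
of all `n` values (`E[M] = E[Mₙ]`) and
`γ = n·(E[Mₙ₋₁]/E[Mₙ] − (n−1)/n)` the competition factor.  Under symmetric
linear bidding a bidder wins iff `v > Y` and then pays the multiplier times
`Y`; the ratio of expected payment to expected earned value equals `γ`, and
with the bid `b⋆(v) = (T/γ)·v` the CPA constraint binds with equality. -/
theorem competition_factor_and_binding_cpa
    {Ω : Type*} [MeasureSpace Ω] [IsProbabilityMeasure (ℙ : Measure Ω)]
    (m : ℕ) (hm : 1 ≤ m)
    (v : Fin (m + 1) → Ω → ℝ)
    (hmeas : ∀ i, Measurable (v i))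
    (hnn : ∀ i ω, 0 ≤ v i ω)
    (hindep : iIndepFun v ℙ)
    (hid : ∀ i j, IdentDistrib (v i) (v j) ℙ ℙ)
    (hatomless : ∀ i (x : ℝ), ℙ {ω | v i ω = x} = 0)
    (hint : ∀ i, Integrable (v i) ℙ)
    (Y M : Ω → ℝ)
    (hY : ∀ ω, Y ω = (Finset.univ.erase (Fin.last m)).fold max 0 (fun i => v i ω))
    (hM : ∀ ω, M ω = Finset.univ.fold max 0 (fun i => v i ω))
    (hMpos : 0 < ∫ ω, M ω ∂ℙ)
    (T : ℝ) (hT : 0 < T)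
    (γ : ℝ)
    (hγ : γ = ((m : ℝ) + 1) * ((∫ ω, Y ω ∂ℙ) / (∫ ω, M ω ∂ℙ) - (m : ℝ) / (m + 1))) :
    (∫ ω, (if Y ω < v (Fin.last m) ω then Y ω else 0) ∂ℙ)
        / (∫ ω, (if Y ω < v (Fin.last m) ω then v (Fin.last m) ω else 0) ∂ℙ) = γ ∧
    (∫ ω, (if Y ω < v (Fin.last m) ω then (T / γ) * Y ω else 0) ∂ℙ)
        = T * ∫ ω, (if Y ω < v (Fin.last m) ω then v (Fin.last m) ω else 0) ∂ℙ := by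
  classical
  set lst := Fin.last m with hlst
  -- abbreviations
  set μ₀ : Measure ℝ := Measure.map (v 0) ℙ with hμ₀
  have hμ : ∀ i, Measure.map (v i) ℙ = μ₀ := fun i => (hid i 0).map_eq
  have hμ₀prob : IsProbabilityMeasure μ₀ := Measure.isProbabilityMeasure_map (hmeas 0).aemeasurable
  set π : Measure (Fin (m + 1) → ℝ) := Measure.pi (fun _ => μ₀) with hπ
  set J : Ω → (Fin (m + 1) → ℝ) := fun ω i => v i ω with hJ
  have hJmeas : Measurable J := measurable_pi_lambda _ hmeas
  have hjoint : Measure.map J ℙ = π := by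
    rw [hπ, hJ, joint_eq_pi v hmeas hindep]
    congr 1
    funext i
    exact hμ i
  -- the per-bidder win functions
  set G : Fin (m + 1) → (Fin (m + 1) → ℝ) → ℝ :=
    fun i x => if (Finset.univ.erase i).fold max 0 x < x i then x i else 0 with hG
  have hfold_meas : ∀ (s : Finset (Fin (m + 1))),
      Measurable (fun x : Fin (m + 1) → ℝ => s.fold max (0:ℝ) x) := by
    intro s
    have := measurable_fold_max_s7 (α := Fin (m + 1) → ℝ) s (fun j x => x j)
      (fun j => measurable_pi_apply j)
    convert this using 2
  have hGmeas : ∀ i, Measurable (G i) := by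
    intro i
    exact Measurable.ite (measurableSet_lt (hfold_meas _) (measurable_pi_apply i))
      (measurable_pi_apply i) measurable_const
  set Z : Fin (m + 1) → Ω → ℝ :=
    fun i ω => if (Finset.univ.erase i).fold max 0 (fun j => v j ω) < v i ω then v i ω else 0
    with hZ
  have hZG : ∀ i ω, Z i ω = G i (J ω) := fun i ω => rfl
  have hZnn : ∀ i ω, 0 ≤ Z i ω := by
    intro i ω
    rw [hZ]
    dsimp only
    split_ifs
    · exact hnn i ω
    · exact le_rfl
  have hZle : ∀ i ω, Z i ω ≤ v i ω := by
    intro i ω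
    rw [hZ]
    dsimp only
    split_ifs
    · exact le_rfl
    · exact hnn i ω
  have hZmeas : ∀ i, Measurable (Z i) := fun i => (hGmeas i).comp hJmeas
  have hZint : ∀ i, Integrable (Z i) ℙ := by
    intro i
    refine (hint i).mono (hZmeas i).aestronglyMeasurable (ae_of_all _ fun ω => ?_)
    rw [Real.norm_eq_abs, Real.norm_eq_abs, abs_of_nonneg (hZnn i ω), abs_of_nonneg (hnn i ω)]
    exact hZle i ω
  -- all Z i have the same integral
  have hZeq : ∀ i, ∫ ω, Z i ω ∂ℙ = ∫ ω, Z lst ω ∂ℙ := by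
    intro i
    have hchg : ∀ k, ∫ ω, Z k ω ∂ℙ = ∫ x, G k x ∂π := by
      intro k
      rw [← hjoint, integral_map hJmeas.aemeasurable (hGmeas k).aestronglyMeasurable]
    rw [hchg i, hchg lst]
    set e : Fin (m + 1) ≃ Fin (m + 1) := Equiv.swap i lst with he
    have hcomp : ∀ x : Fin (m + 1) → ℝ, G lst (x ∘ e) = G i x := by
      intro x
      have h1 : (x ∘ e) lst = x i := by
        simp [he, Equiv.swap_apply_right]
      have himg : (Finset.univ.erase lst).image e = Finset.univ.erase i := by
        ext j
        simp only [Finset.mem_image, Finset.mem_erase, Finset.mem_univ, and_true]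
        constructor
        · rintro ⟨k, hk, rfl⟩
          have hne : e k ≠ e lst := fun hcon => hk (e.injective hcon)
          simpa [he, Equiv.swap_apply_right] using hne
        · intro hj
          refine ⟨e j, fun hcon => hj ?_, by simp [he, Equiv.swap_apply_self]⟩
          have h4 := congrArg e hcon
          simpa [he, Equiv.swap_apply_self, Equiv.swap_apply_right] using h4
      have h2 : (Finset.univ.erase lst).fold max 0 (x ∘ e) = (Finset.univ.erase i).fold max 0 x := by
        rw [← himg, Finset.fold_image]
        intro a _ b _ hab
        exact e.injective hab
      rw [hG]
      dsimp only
      rw [h1, h2]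
    have hmape : Measure.map (fun x : Fin (m + 1) → ℝ => x ∘ e) π = π := map_perm_pi μ₀ e
    have hemeas : Measurable (fun x : Fin (m + 1) → ℝ => x ∘ e) :=
      measurable_pi_lambda _ fun j => measurable_pi_apply (e j)
    calc ∫ x, G i x ∂π = ∫ x, G lst (x ∘ e) ∂π := by
          exact integral_congr_ae (ae_of_all _ fun x => (hcomp x).symm)
      _ = ∫ x, G lst x ∂(Measure.map (fun x : Fin (m + 1) → ℝ => x ∘ e) π) := by
          rw [integral_map hemeas.aemeasurable]
          rw [hmape]
          exact (hGmeas lst).aestronglyMeasurable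
      _ = ∫ x, G lst x ∂π := by rw [hmape]
  -- no-tie a.e. statement
  have hμ₀atom : ∀ x : ℝ, μ₀ {x} = 0 := by
    intro x
    rw [hμ₀, Measure.map_apply (hmeas 0) (measurableSet_singleton x)]
    exact hatomless 0 x
  have hpairnull : ∀ i j : Fin (m + 1), i ≠ j → ℙ {ω | v i ω = v j ω} = 0 := by
    intro i j hij
    have hIF : IndepFun (v i) (v j) ℙ := hindep.indepFun hij
    have hprod := (indepFun_iff_map_prod_eq_prod_map_map (hmeas i).aemeasurable
      (hmeas j).aemeasurable).mp hIF
    have hdiag : MeasurableSet {p : ℝ × ℝ | p.1 = p.2} :=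
      measurableSet_eq_fun measurable_fst measurable_snd
    have hpre : {ω | v i ω = v j ω} = (fun ω => (v i ω, v j ω)) ⁻¹' {p : ℝ × ℝ | p.1 = p.2} := rfl
    rw [hpre, ← Measure.map_apply ((hmeas i).prodMk (hmeas j)) hdiag, hprod, hμ i, hμ j]
    rw [Measure.prod_apply hdiag]
    have : ∀ x : ℝ, μ₀ (Prod.mk x ⁻¹' {p : ℝ × ℝ | p.1 = p.2}) = 0 := by
      intro x
      have : Prod.mk x ⁻¹' {p : ℝ × ℝ | p.1 = p.2} = {x} := by
        ext y; simp [eq_comm]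
      rw [this]
      exact hμ₀atom x
    simp only [this]
    simp
  have hnotie : ∀ᵐ ω ∂ℙ, ∀ i j : Fin (m + 1), i ≠ j → v i ω ≠ v j ω := by
    rw [ae_all_iff]
    intro i
    rw [ae_all_iff]
    intro j
    by_cases hij : i = j
    · simp [hij]
    · have := hpairnull i j hij
      rw [ae_iff]
      convert this using 2
      ext ω
      simp [hij]
  have hnontriv : Nontrivial (Fin (m + 1)) := Fin.nontrivial_iff_two_le.mpr (by omega)
  -- a.e. sum of Z equals M
  have hsumae : ∀ᵐ ω ∂ℙ, ∑ i, Z i ω = M ω := by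
    filter_upwards [hnotie] with ω hdist
    obtain ⟨i₀, _, hmax⟩ := Finset.exists_max_image Finset.univ (fun i => v i ω)
      ⟨lst, Finset.mem_univ lst⟩
    have hmax' : ∀ j, v j ω ≤ v i₀ ω := fun j => hmax j (Finset.mem_univ j)
    have hi₀pos : 0 < v i₀ ω := by
      rcases (hnn i₀ ω).eq_or_lt with h | h
      · exfalso
        obtain ⟨j, hj⟩ := exists_ne i₀
        have hj0 : v j ω = 0 := le_antisymm (by rw [← h] at hmax'; exact hmax' j)
          (hnn j ω)
        exact hdist j i₀ hj (by rw [hj0, ← h])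
      · exact h
    have hMω : M ω = v i₀ ω := by
      rw [hM ω]
      refine le_antisymm ((Finset.fold_max_le _).mpr ⟨hnn i₀ ω, fun j _ => hmax' j⟩) ?_
      exact (Finset.le_fold_max _).mpr (Or.inr ⟨i₀, Finset.mem_univ i₀, le_rfl⟩)
    have hZi₀ : Z i₀ ω = v i₀ ω := by
      rw [hZ]
      dsimp only
      rw [if_pos]
      rw [Finset.fold_max_lt]
      refine ⟨hi₀pos, fun j hj => ?_⟩
      have hjne : j ≠ i₀ := (Finset.mem_erase.mp hj).1
      exact lt_of_le_of_ne (hmax' j) (hdist j i₀ hjne)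
    have hZother : ∀ i, i ≠ i₀ → Z i ω = 0 := by
      intro i hi
      rw [hZ]
      dsimp only
      rw [if_neg]
      push_neg
      refine le_trans (hmax' i) ?_
      exact (Finset.le_fold_max _).mpr (Or.inr ⟨i₀, Finset.mem_erase.mpr
        ⟨hi.symm, Finset.mem_univ i₀⟩, le_rfl⟩)
    rw [Finset.sum_eq_single i₀ (fun i _ hi => hZother i hi) (fun h => absurd (Finset.mem_univ i₀) h)]
    rw [hZi₀, hMω]
  -- integrability of Y and M
  have hsumint : Integrable (fun ω => ∑ i, v i ω) ℙ := integrable_finset_sum _ fun i _ => hint i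
  have hYmeas : Measurable Y := by
    have : Y = fun ω => (Finset.univ.erase lst).fold max 0 (fun i => v i ω) := funext hY
    rw [this]
    exact measurable_fold_max_s7 _ _ hmeas
  have hMmeas : Measurable M := by
    have : M = fun ω => Finset.univ.fold max 0 (fun i => v i ω) := funext hM
    rw [this]
    exact measurable_fold_max_s7 _ _ hmeas
  have hfold_le_sum : ∀ (s : Finset (Fin (m + 1))) ω,
      s.fold max (0:ℝ) (fun i => v i ω) ≤ ∑ i, v i ω := by
    intro s ω
    refine (Finset.fold_max_le _).mpr ⟨Finset.sum_nonneg fun i _ => hnn i ω, fun j hj => ?_⟩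
    exact Finset.single_le_sum (fun i _ => hnn i ω) (Finset.mem_univ j)
  have hfold_nn : ∀ (s : Finset (Fin (m + 1))) ω,
      (0:ℝ) ≤ s.fold max 0 (fun i => v i ω) :=
    fun s ω => (Finset.le_fold_max _).mpr (Or.inl le_rfl)
  have hYnn : ∀ ω, 0 ≤ Y ω := fun ω => (hY ω) ▸ hfold_nn _ ω
  have hMnn : ∀ ω, 0 ≤ M ω := fun ω => (hM ω) ▸ hfold_nn _ ω
  have hYint : Integrable Y ℙ := by
    refine hsumint.mono hYmeas.aestronglyMeasurable (ae_of_all _ fun ω => ?_)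
    rw [Real.norm_eq_abs, Real.norm_eq_abs, abs_of_nonneg (hYnn ω),
      abs_of_nonneg (Finset.sum_nonneg fun i _ => hnn i ω)]
    rw [hY ω]
    exact hfold_le_sum _ ω
  have hMint : Integrable M ℙ := by
    refine hsumint.mono hMmeas.aestronglyMeasurable (ae_of_all _ fun ω => ?_)
    rw [Real.norm_eq_abs, Real.norm_eq_abs, abs_of_nonneg (hMnn ω),
      abs_of_nonneg (Finset.sum_nonneg fun i _ => hnn i ω)]
    rw [hM ω]
    exact hfold_le_sum _ ω
  -- key identity: ∫ M = (m+1) * A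
  set A := ∫ ω, Z lst ω ∂ℙ with hA
  have hIM : ∫ ω, M ω ∂ℙ = ((m : ℝ) + 1) * A := by
    have h1 : ∫ ω, M ω ∂ℙ = ∫ ω, ∑ i, Z i ω ∂ℙ := (integral_congr_ae hsumae).symm
    rw [h1, integral_finset_sum _ fun i _ => hZint i]
    have h2 : ∀ i ∈ Finset.univ, ∫ ω, Z i ω ∂ℙ = A := fun i _ => hZeq i
    rw [Finset.sum_congr rfl h2, Finset.sum_const, Finset.card_univ, Fintype.card_fin]
    push_cast
    ring
  have hApos : 0 < A := by
    by_contra h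
    push_neg at h
    have : ∫ ω, M ω ∂ℙ ≤ 0 := by
      rw [hIM]
      have : (0:ℝ) ≤ (m : ℝ) + 1 := by positivity
      nlinarith
    linarith
  -- Z lst is exactly the statement's earned-value integrand
  have hZlst_eq : ∀ ω, Z lst ω = if Y ω < v lst ω then v lst ω else 0 := by
    intro ω
    rw [hZ]
    dsimp only
    rw [hY ω]
  have hAeq : A = ∫ ω, (if Y ω < v lst ω then v lst ω else 0) ∂ℙ := by
    rw [hA]
    exact integral_congr_ae (ae_of_all _ hZlst_eq)
  -- payment integrand identity
  set fB : Ω → ℝ := fun ω => if Y ω < v lst ω then Y ω else 0 with hfB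
  have hMmax : ∀ ω, M ω = max (v lst ω) (Y ω) := by
    intro ω
    rw [hM ω, hY ω]
    have huniv : (Finset.univ : Finset (Fin (m + 1))) = insert lst (Finset.univ.erase lst) :=
      (Finset.insert_erase (Finset.mem_univ lst)).symm
    conv_lhs => rw [huniv]
    rw [Finset.fold_insert (Finset.notMem_erase lst Finset.univ)]
  have hfB_eq : ∀ ω, fB ω = Y ω + Z lst ω - M ω := by
    intro ω
    rw [hfB, hMmax ω, hZlst_eq ω]
    dsimp only
    split_ifs with h
    · rw [max_eq_left h.le]
      ring
    · push_neg at h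
      rw [max_eq_right h]
      ring
  have hfBint : Integrable fB ℙ := by
    have hfunext : fB = fun ω => Y ω + Z lst ω - M ω := funext hfB_eq
    rw [hfunext]
    exact (hYint.add (hZint lst)).sub hMint
  have hB : ∫ ω, fB ω ∂ℙ = (∫ ω, Y ω ∂ℙ) + A - ∫ ω, M ω ∂ℙ := by
    have h1 : ∫ ω, fB ω ∂ℙ = ∫ ω, (Y ω + Z lst ω - M ω) ∂ℙ :=
      integral_congr_ae (ae_of_all _ hfB_eq)
    have hYZ : Integrable (fun ω => Y ω + Z lst ω) ℙ := hYint.add (hZint lst)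
    rw [h1, integral_sub hYZ hMint, integral_add hYint (hZint lst)]
  set B := ∫ ω, fB ω ∂ℙ with hBdef
  -- positivity of B
  have hBpos : 0 < B := by
    -- find c > 0 with μ₀ (Ioi c) > 0
    have hIoi0 : 0 < μ₀ (Ioi 0) := by
      rcases eq_or_lt_of_le (zero_le : 0 ≤ μ₀ (Ioi 0)) with h | h
      · exfalso
        have hvae : ∀ i, ∀ᵐ ω ∂ℙ, v i ω ≤ 0 := by
          intro i
          have hpre : ℙ (v i ⁻¹' Ioi 0) = μ₀ (Ioi 0) := by
            rw [(hid i 0).measure_mem_eq measurableSet_Ioi, hμ₀,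
              Measure.map_apply (hmeas 0) measurableSet_Ioi]
          rw [ae_iff]
          have : {ω | ¬v i ω ≤ 0} = v i ⁻¹' Ioi 0 := by
            ext ω; simp [not_le]
          rw [this, hpre, ← h]
        have hallz : ∀ᵐ ω ∂ℙ, ∀ i, v i ω ≤ 0 := ae_all_iff.mpr hvae
        have hMz : ∀ᵐ ω ∂ℙ, M ω = 0 := by
          filter_upwards [hallz] with ω hz
          rw [hM ω]
          refine le_antisymm ((Finset.fold_max_le _).mpr ⟨le_rfl, fun j _ =>
            le_antisymm (hz j) (hnn j ω) ▸ le_rfl⟩) (hfold_nn _ ω)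
        have : ∫ ω, M ω ∂ℙ = 0 := by
          rw [integral_congr_ae hMz]
          simp
        linarith
      · exact h
    have hIoic : ∃ c : ℝ, 0 < c ∧ 0 < μ₀ (Ioi c) := by
      have hU : Ioi (0:ℝ) ⊆ ⋃ n : ℕ, Ioi (1 / ((n:ℝ) + 1)) := by
        intro x hx
        obtain ⟨n, hn⟩ := exists_nat_one_div_lt (show (0:ℝ) < x from hx)
        exact mem_iUnion.mpr ⟨n, hn⟩
      by_contra h
      push_neg at h
      have hz : ∀ n : ℕ, μ₀ (Ioi (1 / ((n:ℝ) + 1))) = 0 := by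
        intro n
        have : (0:ℝ) < 1 / ((n:ℝ) + 1) := by positivity
        exact le_antisymm (h _ this) zero_le
      have := le_trans (measure_mono hU) (le_of_eq (measure_iUnion_null hz))
      exact absurd (le_antisymm this zero_le) (ne_of_gt hIoi0)
    obtain ⟨c, hc, hpc⟩ := hIoic
    obtain ⟨a, b, ha, hab, hIocab, hIoib⟩ := exists_good_intervals μ₀ hμ₀atom hc hpc
    -- the event
    set s : Fin (m + 1) → Set ℝ := fun i => if i = lst then Ioi b else Ioc a b with hs
    have hsmeas : ∀ i, MeasurableSet (s i) := by
      intro i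
      rw [hs]
      dsimp only
      split_ifs
      · exact measurableSet_Ioi
      · exact measurableSet_Ioc
    set E : Set Ω := ⋂ i ∈ Finset.univ, v i ⁻¹' s i with hE
    have hEmeas : MeasurableSet E := by
      refine MeasurableSet.biInter (Finset.countable_toSet _) fun i _ => (hmeas i) (hsmeas i)
    have hEpos : ℙ E ≠ 0 := by
      rw [hE, hindep.measure_inter_preimage_eq_mul Finset.univ (fun i _ => hsmeas i)]
      rw [Finset.prod_ne_zero_iff]
      intro i _
      have hpre : ℙ (v i ⁻¹' s i) = μ₀ (s i) := by
        rw [(hid i 0).measure_mem_eq (hsmeas i), hμ₀, Measure.map_apply (hmeas 0) (hsmeas i)]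
      rw [hpre, hs]
      dsimp only
      split_ifs
      · exact ne_of_gt hIoib
      · exact ne_of_gt hIocab
    have hfBonE : ∀ ω ∈ E, a ≤ fB ω := by
      intro ω hω
      rw [hE] at hω
      simp only [Set.mem_iInter, Finset.mem_coe] at hω
      have hval : ∀ i, v i ω ∈ s i := by
        intro i
        have := hω i
        simpa using this (Finset.mem_univ i)
      have hlast : b < v lst ω := by
        have := hval lst
        rw [hs] at this
        simpa using this
      have hothers : ∀ j, j ≠ lst → v j ω ∈ Ioc a b := by
        intro j hj
        have := hval j
        rw [hs] at this
        simpa [hj] using this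
      have hYb : Y ω ≤ b := by
        rw [hY ω]
        refine (Finset.fold_max_le _).mpr ⟨by linarith, fun j hj => ?_⟩
        exact (hothers j (Finset.mem_erase.mp hj).1).2
      have hYa : a < Y ω := by
        have hne : (Finset.univ.erase lst : Finset (Fin (m + 1))).Nonempty := by
          obtain ⟨j, hj⟩ := exists_ne lst
          exact ⟨j, Finset.mem_erase.mpr ⟨hj, Finset.mem_univ j⟩⟩
        obtain ⟨j0, hj0⟩ := hne
        have h1 : v j0 ω ≤ Y ω := by
          rw [hY ω]
          exact (Finset.le_fold_max _).mpr (Or.inr ⟨j0, hj0, le_rfl⟩)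
        have h2 : a < v j0 ω := (hothers j0 (Finset.mem_erase.mp hj0).1).1
        linarith
      have hYlt : Y ω < v lst ω := lt_of_le_of_lt hYb hlast
      rw [hfB]
      dsimp only
      rw [if_pos hYlt]
      exact hYa.le
    have hind_int : Integrable (E.indicator fun _ => a) ℙ :=
      (integrable_const a).indicator hEmeas
    have hle : ∀ ω, E.indicator (fun _ => a) ω ≤ fB ω := by
      intro ω
      by_cases hω : ω ∈ E
      · rw [Set.indicator_of_mem hω]
        exact hfBonE ω hω
      · rw [Set.indicator_of_notMem hω]
        rw [hfB]
        dsimp only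
        split_ifs
        · exact hYnn ω
        · exact le_rfl
    have hBI : a * (ℙ E).toReal ≤ B := by
      have := integral_mono hind_int hfBint hle
      rwa [integral_indicator_const a hEmeas, smul_eq_mul, mul_comm] at this
    have hEtop : ℙ E ≠ ⊤ := measure_ne_top _ _
    have : 0 < (ℙ E).toReal := ENNReal.toReal_pos hEpos hEtop
    nlinarith
  -- final arithmetic
  set IY := ∫ ω, Y ω ∂ℙ with hIY
  set IM := ∫ ω, M ω ∂ℙ with hIMdef
  have hIMne : IM ≠ 0 := ne_of_gt hMpos
  have hm1 : ((m:ℝ) + 1) ≠ 0 := by positivity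
  have hBγA : B = γ * A := by
    rw [hB, hγ, hIM]
    field_simp
    ring
  have hγpos : 0 < γ := by
    by_contra h
    push_neg at h
    have : B ≤ 0 := by
      rw [hBγA]
      exact mul_nonpos_of_nonpos_of_nonneg h hApos.le
    linarith
  constructor
  · rw [← hAeq]
    rw [hBγA, mul_div_assoc, div_self (ne_of_gt hApos), mul_one]
  · rw [← hAeq]
    have h1 : ∫ ω, (if Y ω < v lst ω then (T / γ) * Y ω else 0) ∂ℙ
        = (T / γ) * B := by
      rw [hBdef]
      rw [← integral_const_mul]
      refine integral_congr_ae (ae_of_all _ fun ω => ?_)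
      rw [hfB]
      dsimp only
      split_ifs
      · rfl
      · rw [mul_zero]
    rw [h1, hBγA]
    field_simp
end

section
/- Let F be a distribution supported on a compact interval [0, m] with m > 0 and F(x) < 1 for all x < m, let Mₖ be the maximum of k i.i.d. draws from F, and γ(F,n) = n·(E[Mₙ₋₁]/E[Mₙ] − (n−1)/n). Then γ(F,n) → 1 as n → ∞. -/
open MeasureTheory ProbabilityTheory Set Filter

/-- For `r ∈ [0,1]`, `n * r^(n-1) * (1-r) ≤ 1`. -/
lemma aux_mul_pow_le_one {r : ℝ} (h0 : 0 ≤ r) (h1 : r ≤ 1) (n : ℕ) :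
    (n : ℝ) * (r ^ (n - 1) * (1 - r)) ≤ 1 := by
  have h2 : (n : ℝ) * r ^ (n - 1) ≤ ∑ i ∈ Finset.range n, r ^ i := by
    calc (n : ℝ) * r ^ (n - 1) = ∑ _i ∈ Finset.range n, r ^ (n - 1) := by
          simp [Finset.sum_const, mul_comm]
      _ ≤ ∑ i ∈ Finset.range n, r ^ i := by
          apply Finset.sum_le_sum
          intro i hi
          exact pow_le_pow_of_le_one h0 h1 (by have := Finset.mem_range.mp hi; omega)
  have h3 : (∑ i ∈ Finset.range n, r ^ i) * (1 - r) = 1 - r ^ n := by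
    have := geom_sum_mul r n
    nlinarith [this]
  have h4 : 0 ≤ 1 - r := by linarith
  calc (n : ℝ) * (r ^ (n - 1) * (1 - r)) = ((n : ℝ) * r ^ (n - 1)) * (1 - r) := by ring
    _ ≤ (∑ i ∈ Finset.range n, r ^ i) * (1 - r) := by
        apply mul_le_mul_of_nonneg_right h2 h4
    _ = 1 - r ^ n := h3
    _ ≤ 1 := by nlinarith [pow_nonneg h0 n]

lemma aux_tendsto_mul_pow {r : ℝ} (h0 : 0 ≤ r) (h1 : r < 1) :
    Tendsto (fun n : ℕ => (n : ℝ) * r ^ (n - 1)) atTop (nhds 0) := by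
  have ha : Tendsto (fun n : ℕ => ((n - 1 : ℕ) : ℝ) * r ^ (n - 1)) atTop (nhds 0) :=
    (tendsto_self_mul_const_pow_of_lt_one h0 h1).comp (tendsto_sub_atTop_nat 1)
  have hb : Tendsto (fun n : ℕ => r ^ (n - 1)) atTop (nhds 0) :=
    (tendsto_pow_atTop_nhds_zero_of_lt_one h0 h1).comp (tendsto_sub_atTop_nat 1)
  have := ha.add hb
  rw [add_zero] at this
  apply this.congr'
  filter_upwards [eventually_ge_atTop 1] with n hn
  have h : ((n - 1 : ℕ) : ℝ) + 1 = (n : ℝ) := by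
    have : n - 1 + 1 = n := by omega
    exact_mod_cast congrArg (Nat.cast : ℕ → ℝ) this
  rw [← h]; ring

/-- **Convergence of the competition factor:** if the common distribution of
the i.i.d. nonnegative values is supported on a compact interval `[0, c]` with
`c > 0` and `F(x) < 1` for every `x < c`, then
`γ(F,n) = n·(E[Mₙ₋₁]/E[Mₙ] − (n−1)/n) → 1` as `n → ∞`, where `M k` denotes the
maximum of the first `k` draws. -/
theorem competition_factor_tendsto_one
    {Ω : Type*} [MeasureSpace Ω] [IsProbabilityMeasure (ℙ : Measure Ω)]
    (v : ℕ → Ω → ℝ)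
    (hmeas : ∀ i, Measurable (v i))
    (hindep : iIndepFun v ℙ)
    (hid : ∀ i j, IdentDistrib (v i) (v j) ℙ ℙ)
    (c : ℝ) (hc : 0 < c)
    (hrange : ∀ i ω, v i ω ∈ Icc 0 c)
    (hcdf : ∀ x, x < c → ℙ {ω | v 0 ω ≤ x} < 1)
    (M : ℕ → Ω → ℝ)
    (hM : ∀ k ω, M k ω = (Finset.range k).fold max 0 (fun i => v i ω)) :
    Tendsto
      (fun n : ℕ =>
        (n : ℝ) * ((∫ ω, M (n - 1) ω ∂ℙ) / (∫ ω, M n ω ∂ℙ) - ((n : ℝ) - 1) / n))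
      atTop (nhds 1) := by
  -- the (real-valued) CDF
  set F : ℝ → ℝ := fun t => (ℙ (v 0 ⁻¹' Iic t)).toReal with hF
  have hprob_ne_top : ∀ t, ℙ (v 0 ⁻¹' Iic t) ≠ ⊤ := fun t => measure_ne_top _ _
  have hF0 : ∀ t, 0 ≤ F t := fun t => ENNReal.toReal_nonneg
  have hF1 : ∀ t, F t ≤ 1 := by
    intro t
    have h := prob_le_one (μ := (ℙ : Measure Ω)) (s := v 0 ⁻¹' Iic t)
    have := ENNReal.toReal_mono (by norm_num) h
    simpa using this
  have hFlt : ∀ t, t < c → F t < 1 := by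
    intro t ht
    have h := hcdf t ht
    have h' : {ω | v 0 ω ≤ t} = v 0 ⁻¹' Iic t := rfl
    rw [h'] at h
    have := (ENNReal.toReal_lt_toReal (hprob_ne_top t) (by norm_num)).mpr h
    simpa using this
  have hFeq1 : ∀ t, c ≤ t → F t = 1 := by
    intro t ht
    have h' : v 0 ⁻¹' Iic t = univ := by
      ext ω; simp only [mem_preimage, mem_Iic, mem_univ, iff_true]
      exact le_trans (hrange 0 ω).2 ht
    simp [hF, h', measure_univ]
  have hFmono : Monotone F := by
    intro s t hst
    apply ENNReal.toReal_mono (hprob_ne_top t)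
    exact measure_mono (preimage_mono (Iic_subset_Iic.mpr hst))
  have hFmeas : Measurable F := hFmono.measurable
  -- basic facts about M
  have hfoldmeas : ∀ k, Measurable fun ω => (Finset.range k).fold max 0 (fun i => v i ω) := by
    intro k
    induction k with
    | zero => simpa using measurable_const
    | succ k ih =>
      have : (fun ω => (Finset.range (k + 1)).fold max 0 (fun i => v i ω)) =
          fun ω => max (v k ω) ((Finset.range k).fold max 0 (fun i => v i ω)) := by
        funext ω
        rw [Finset.range_add_one, Finset.fold_insert (by simp)]
      rw [this]
      exact (hmeas k).max ih
  have hMmeas : ∀ k, Measurable (M k) := by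
    intro k
    have : M k = fun ω => (Finset.range k).fold max 0 (fun i => v i ω) := by
      funext ω; exact hM k ω
    rw [this]; exact hfoldmeas k
  have hMrange : ∀ k ω, M k ω ∈ Icc 0 c := by
    intro k ω
    rw [hM]
    constructor
    · exact (Finset.le_fold_max _).mpr (Or.inl le_rfl)
    · exact (Finset.fold_max_le _).mpr ⟨hc.le, fun i _ => (hrange i ω).2⟩
  have hMint : ∀ k, Integrable (M k) ℙ := by
    intro k
    refine (integrable_const c).mono' (hMmeas k).aestronglyMeasurable ?_
    filter_upwards with ω
    rw [Real.norm_eq_abs, abs_of_nonneg (hMrange k ω).1]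
    exact (hMrange k ω).2
  -- the layer cake formula
  have key : ∀ k, (∫ ω, M k ω ∂ℙ) = ∫ t in Ioc 0 c, (1 - F t ^ k) := by
    intro k
    have hnn : 0 ≤ᵐ[ℙ] M k := Eventually.of_forall fun ω => (hMrange k ω).1
    rw [(hMint k).integral_eq_integral_meas_lt hnn]
    have hmeaseq : ∀ t ∈ Ioi (0:ℝ), (ℙ {a | t < M k a}).toReal = 1 - F t ^ k := by
      intro t ht
      have hset : {a | M k a ≤ t} = ⋂ i ∈ Finset.range k, v i ⁻¹' Iic t := by
        ext ω
        simp only [mem_setOf_eq, hM, Finset.fold_max_le, mem_iInter, mem_preimage, mem_Iic]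
        exact ⟨fun h => h.2, fun h => ⟨le_of_lt ht, h⟩⟩
      have hprod : ℙ (⋂ i ∈ Finset.range k, v i ⁻¹' Iic t) = (ℙ (v 0 ⁻¹' Iic t)) ^ k := by
        rw [hindep.meas_biInter (fun i _ => ⟨Iic t, measurableSet_Iic, rfl⟩)]
        rw [Finset.prod_congr rfl
          (fun i _ => (hid i 0).measure_mem_eq measurableSet_Iic)]
        simp [Finset.prod_const]
      have hcompl : {a | t < M k a} = {a | M k a ≤ t}ᶜ := by
        ext ω; simp [not_le]
      have hmsle : MeasurableSet {a | M k a ≤ t} :=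
        measurableSet_le (hMmeas k) measurable_const
      rw [hcompl, prob_compl_eq_one_sub hmsle, hset, hprod]
      rw [ENNReal.toReal_sub_of_le (pow_le_one' prob_le_one k) ENNReal.one_ne_top]
      simp [ENNReal.toReal_pow, hF]
    simp only [measureReal_def]
    rw [setIntegral_congr_fun measurableSet_Ioi hmeaseq]
    apply setIntegral_eq_of_subset_of_ae_diff_eq_zero nullMeasurableSet_Ioi
      Ioc_subset_Ioi_self
    refine Eventually.of_forall fun t ht => ?_
    have htc : c < t := by
      rcases ht with ⟨ht1, ht2⟩
      simp only [mem_Ioc, not_and, not_le, mem_Ioi] at ht1 ht2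
      exact ht2 ht1
    rw [hFeq1 t htc.le]
    simp
  -- the function g
  set g : ℕ → ℝ := fun k => ∫ t in Ioc 0 c, (1 - F t ^ k) with hg
  haveI hfin : IsFiniteMeasure (volume.restrict (Ioc 0 c)) := by
    constructor
    rw [Measure.restrict_apply_univ, Real.volume_Ioc]
    exact ENNReal.ofReal_lt_top
  have hint : ∀ (φ : ℝ → ℝ), Measurable φ → (∀ t, |φ t| ≤ 1) →
      Integrable φ (volume.restrict (Ioc 0 c)) := by
    intro φ hφ hb
    refine (integrable_const 1).mono' hφ.aestronglyMeasurable ?_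
    filter_upwards with t
    simpa using hb t
  have hFpow01 : ∀ (t : ℝ) (k : ℕ), F t ^ k ∈ Icc (0:ℝ) 1 :=
    fun t k => ⟨pow_nonneg (hF0 t) k, pow_le_one₀ (hF0 t) (hF1 t)⟩
  have hint1 : ∀ k, Integrable (fun t => 1 - F t ^ k) (volume.restrict (Ioc 0 c)) := by
    intro k
    refine hint _ (measurable_const.sub (hFmeas.pow_const k)) fun t => ?_
    have := hFpow01 t k
    rw [abs_le]
    constructor <;> [linarith [this.2]; linarith [this.1]]
  -- positivity of g 1
  have hg1pos : 0 < g 1 := by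
    have hsub : ∫ t in Ioc 0 (c/2), (1 - F t ^ 1) ≤ ∫ t in Ioc 0 c, (1 - F t ^ 1) := by
      apply setIntegral_mono_set (hint1 1)
      · filter_upwards with t
        have := hFpow01 t 1
        simp only [Pi.zero_apply]
        linarith [this.2]
      · exact Eventually.of_forall (Ioc_subset_Ioc_right (by linarith))
    have hconst : (1 - F (c/2)) * ((volume (Ioc 0 (c/2))).toReal) ≤
        ∫ t in Ioc 0 (c/2), (1 - F t ^ 1) := by
      rw [← measureReal_def]
      apply setIntegral_ge_of_const_le_real measurableSet_Ioc
        (by rw [Real.volume_Ioc]; exact ENNReal.ofReal_ne_top)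
      · intro t htmem
        have : F t ≤ F (c/2) := hFmono htmem.2
        simp only [pow_one]
        linarith
      · exact (hint1 1).mono_measure (Measure.restrict_mono (Ioc_subset_Ioc_right (by linarith)) le_rfl)
    have hFc2 : F (c/2) < 1 := hFlt _ (by linarith)
    have hvol : (volume (Ioc 0 (c/2))).toReal = c/2 := by
      rw [Real.volume_Ioc, ENNReal.toReal_ofReal (by linarith)]
      ring
    have hpos : 0 < (1 - F (c/2)) * ((volume (Ioc 0 (c/2))).toReal) := by
      rw [hvol]
      have : 0 < 1 - F (c/2) := by linarith
      positivity
    calc (0:ℝ) < _ := hpos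
      _ ≤ _ := hconst
      _ ≤ g 1 := hsub
  -- monotone lower bound
  have hmono : ∀ n : ℕ, 1 ≤ n → g 1 ≤ g n := by
    intro n hn
    apply integral_mono (hint1 1) (hint1 n)
    intro t
    have h1 : F t ^ n ≤ F t ^ 1 := pow_le_pow_of_le_one (hF0 t) (hF1 t) hn
    simp only
    linarith
  -- a.e. fact : t ≠ c
  have hne : ∀ᵐ t ∂(volume.restrict (Ioc 0 c)), t ≠ c := by
    refine ae_iff.mpr ?_
    have hs : {t : ℝ | ¬ t ≠ c} = {c} := by ext t; simp
    rw [hs]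
    have h1 : (volume.restrict (Ioc 0 c)) {c} ≤ volume {c} :=
      Measure.restrict_apply_le _ _
    rw [Real.volume_singleton] at h1
    exact le_antisymm h1 zero_le
  -- g tends to c
  have hgc : Tendsto g atTop (nhds c) := by
    have hdc := tendsto_integral_of_dominated_convergence (μ := volume.restrict (Ioc 0 c))
      (F := fun n t => 1 - F t ^ n) (f := fun _ => (1:ℝ)) (bound := fun _ => (1:ℝ))
      (fun n => (hint1 n).aestronglyMeasurable)
      (integrable_const 1)
      (fun n => by
        filter_upwards with t
        have := hFpow01 t n
        rw [Real.norm_eq_abs, abs_le]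
        constructor <;> [linarith [this.2]; linarith [this.1]])
      (by
        filter_upwards [ae_restrict_mem measurableSet_Ioc, hne] with t htmem htne
        have htc : t < c := lt_of_le_of_ne htmem.2 htne
        have h0 : Tendsto (fun n : ℕ => F t ^ n) atTop (nhds 0) :=
          tendsto_pow_atTop_nhds_zero_of_lt_one (hF0 t) (hFlt t htc)
        have := tendsto_const_nhds (x := (1:ℝ)) (f := atTop (α := ℕ)) |>.sub h0
        simpa using this)
    have hval : ∫ _t in Ioc 0 c, (1:ℝ) = c := by
      rw [setIntegral_const, measureReal_def, Real.volume_Ioc, smul_eq_mul,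
        ENNReal.toReal_ofReal (by linarith)]
      ring
    rw [hval] at hdc
    exact hdc
  -- n * (g n - g (n-1)) → 0
  have hd : Tendsto (fun n : ℕ => (n : ℝ) * (g n - g (n - 1))) atTop (nhds 0) := by
    have hintn : ∀ n : ℕ, Integrable
        (fun t => (n : ℝ) * (F t ^ (n - 1) * (1 - F t))) (volume.restrict (Ioc 0 c)) := by
      intro n
      refine hint _ (measurable_const.mul ((hFmeas.pow_const _).mul
        (measurable_const.sub hFmeas))) fun t => ?_
      have hnn : 0 ≤ (n : ℝ) * (F t ^ (n - 1) * (1 - F t)) := by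
        have := hFpow01 t (n-1)
        have h2 : 0 ≤ 1 - F t := by linarith [hF1 t]
        positivity
      rw [abs_of_nonneg hnn]
      exact aux_mul_pow_le_one (hF0 t) (hF1 t) n
    have hdc := tendsto_integral_of_dominated_convergence (μ := volume.restrict (Ioc 0 c))
      (F := fun n t => (n : ℝ) * (F t ^ (n - 1) * (1 - F t))) (f := fun _ => (0:ℝ))
      (bound := fun _ => (1:ℝ))
      (fun n => (hintn n).aestronglyMeasurable)
      (integrable_const 1)
      (fun n => by
        filter_upwards with t
        have hnn : 0 ≤ (n : ℝ) * (F t ^ (n - 1) * (1 - F t)) := by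
          have := hFpow01 t (n-1)
          have h2 : 0 ≤ 1 - F t := by linarith [hF1 t]
          positivity
        rw [Real.norm_eq_abs, abs_of_nonneg hnn]
        exact aux_mul_pow_le_one (hF0 t) (hF1 t) n)
      (by
        filter_upwards [ae_restrict_mem measurableSet_Ioc, hne] with t htmem htne
        have htc : t < c := lt_of_le_of_ne htmem.2 htne
        have h0 := (aux_tendsto_mul_pow (hF0 t) (hFlt t htc)).mul_const (1 - F t)
        rw [zero_mul] at h0
        apply h0.congr
        intro n
        ring)
    rw [integral_zero] at hdc
    apply hdc.congr'
    filter_upwards [eventually_ge_atTop 1] with n hn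
    have hn' : n - 1 + 1 = n := by omega
    have h1 : g n - g (n - 1) = ∫ t in Ioc 0 c, (F t ^ (n - 1) * (1 - F t)) := by
      rw [hg]
      simp only
      rw [← integral_sub (hint1 n) (hint1 (n - 1))]
      refine integral_congr_ae (Eventually.of_forall fun t => ?_)
      have hpw : F t ^ n = F t ^ (n - 1) * F t := by rw [← pow_succ, hn']
      simp only
      rw [hpw]
      ring
    rw [MeasureTheory.integral_const_mul, ← h1]
  -- assemble
  have hzero : Tendsto (fun n : ℕ => (n : ℝ) * (g (n - 1) - g n)) atTop (nhds 0) := by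
    have := hd.neg
    rw [neg_zero] at this
    apply this.congr
    intro n
    ring
  have hq := hzero.div hgc hc.ne'
  rw [zero_div] at hq
  have hmain : Tendsto (fun n : ℕ => 1 + ((n : ℝ) * (g (n - 1) - g n)) / g n)
      atTop (nhds 1) := by
    have := (tendsto_const_nhds (x := (1:ℝ)) (f := atTop (α := ℕ))).add hq
    rw [add_zero] at this
    exact this
  apply hmain.congr'
  filter_upwards [eventually_ge_atTop 1] with n hn
  have hgn : 0 < g n := lt_of_lt_of_le hg1pos (hmono n hn)
  rw [key, key]
  have hn0 : (n : ℝ) ≠ 0 := Nat.cast_ne_zero.mpr (by omega)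
  show 1 + (n : ℝ) * (g (n-1) - g n) / g n = (n : ℝ) * (g (n-1) / g n - ((n:ℝ) - 1) / n)
  field_simp
  ring
end

section
/- Fix κ ∈ [0,1], let S(b, b⁻) = (1−κ)·b + κ·b⁻, let b̂⁻ be a nonnegative random variable, w ≥ 0, and c > 0. If b̂ maximizes the function b ↦ E[(w − S(b, b̂⁻))·1{b > b̂⁻}] over b ∈ [0,∞), then c·b̂ maximizes the function b ↦ E[(c·w − S(b, c·b̂⁻))·1{b > c·b̂⁻}] over b ∈ [0,∞). Consequently, if b̂(·) is a symmetric equilibrium strategy of the standard (unconstrained) auction with payment rule S, then for any c > 0 the scaled strategy c·b̂(·) is a symmetric best reply against competitors using c·b̂(·) in the Lagrangian-relaxed problem. -/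
open MeasureTheory ProbabilityTheory Set

/-- **Scaling lemma for mixed first/second price auctions.**  With payment rule
`S(b, b⁻) = (1−κ)·b + κ·b⁻` (positively homogeneous of degree one), if the bid
`b̂` maximizes `b ↦ E[(w − S(b, b̂⁻))·1{b > b̂⁻}]` over `b ∈ [0,∞)` against the
nonnegative random price to beat `b̂⁻`, then for any `c > 0` the scaled bid
`c·b̂` maximizes `b ↦ E[(c·w − S(b, c·b̂⁻))·1{b > c·b̂⁻}]` over `b ∈ [0,∞)`.
Consequently a symmetric equilibrium strategy of the standard auction scales to
a symmetric best reply in the Lagrangian-relaxed CPA-constrained auction. -/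
theorem mixed_auction_scaling
    {Ω : Type*} [MeasureSpace Ω] [IsProbabilityMeasure (ℙ : Measure Ω)]
    (κ : ℝ) (hκ : κ ∈ Icc (0:ℝ) 1)
    (bm : Ω → ℝ) (hbm : Measurable bm) (hbm0 : ∀ ω, 0 ≤ bm ω)
    (w c : ℝ) (hw : 0 ≤ w) (hc : 0 < c)
    (bhat : ℝ) (hbhat0 : 0 ≤ bhat)
    (hmax : ∀ b : ℝ, 0 ≤ b →
      (∫ ω, (if bm ω < b then w - ((1 - κ) * b + κ * bm ω) else 0) ∂ℙ)
        ≤ ∫ ω, (if bm ω < bhat then w - ((1 - κ) * bhat + κ * bm ω) else 0) ∂ℙ) :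
    ∀ b : ℝ, 0 ≤ b →
      (∫ ω, (if c * bm ω < b
          then c * w - ((1 - κ) * b + κ * (c * bm ω)) else 0) ∂ℙ)
        ≤ ∫ ω, (if c * bm ω < c * bhat
            then c * w - ((1 - κ) * (c * bhat) + κ * (c * bm ω)) else 0) ∂ℙ := by
  intro b hb
  have key : ∀ (x : ℝ),
      (fun ω => if c * bm ω < c * x
          then c * w - ((1 - κ) * (c * x) + κ * (c * bm ω)) else 0)
        = fun ω => c * (if bm ω < x then w - ((1 - κ) * x + κ * bm ω) else 0) := by
    intro x
    funext ω
    by_cases h : bm ω < x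
    · rw [if_pos h, if_pos (by exact (mul_lt_mul_iff_right₀ hc).2 h)]
      ring
    · rw [if_neg h, if_neg (by simpa [mul_lt_mul_iff_right₀ hc] using h), mul_zero]
  have hbc : b = c * (b / c) := by field_simp
  calc (∫ ω, (if c * bm ω < b
          then c * w - ((1 - κ) * b + κ * (c * bm ω)) else 0) ∂ℙ)
      = ∫ ω, (if c * bm ω < c * (b / c)
          then c * w - ((1 - κ) * (c * (b / c)) + κ * (c * bm ω)) else 0) ∂ℙ := by
        rw [← hbc]
    _ = c * ∫ ω, (if bm ω < b / c then w - ((1 - κ) * (b / c) + κ * bm ω) else 0) ∂ℙ := by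
        rw [key (b / c), integral_const_mul]
    _ ≤ c * ∫ ω, (if bm ω < bhat then w - ((1 - κ) * bhat + κ * bm ω) else 0) ∂ℙ := by
        exact mul_le_mul_of_nonneg_left (hmax _ (div_nonneg hb hc.le)) hc.le
    _ = _ := by rw [key bhat, integral_const_mul]
end

section
/- Let a > 0 and let v₁, v₂ be i.i.d. random variables on [0,1] with cumulative distribution F(t) = tᵃ. For bid multipliers 0 < α ≤ β, bidder 1 bids α·v₁ and bidder 2 bids β·v₂ in a second price auction, so bidder 1 wins when α·v₁ > β·v₂ and then pays β·v₂. Then bidder 1's CPA, the ratio E[β·v₂·1{α·v₁ > β·v₂}] / E[v₁·1{α·v₁ > β·v₂}], equals (a/(a+1))·α and in particular does not depend on bidder 2's multiplier β. -/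
open MeasureTheory ProbabilityTheory Set
open scoped ENNReal NNReal

noncomputable def pwMeasure (a : ℝ) : Measure ℝ :=
  (volume.restrict (Ioc 0 1)).withDensity (fun y => ENNReal.ofReal (a * y ^ (a-1)))



lemma pw_density_meas (a : ℝ) : Measurable (fun y : ℝ => ENNReal.ofReal (a * y ^ (a-1))) := by
  measurability

lemma pw_lint (a : ℝ) (ha : 0 < a) {t : ℝ} (ht : 0 ≤ t) :
    ∫⁻ y in Ioc (0:ℝ) t, ENNReal.ofReal (a * y ^ (a-1)) = ENNReal.ofReal (t ^ a) := by
  have hint : IntegrableOn (fun y : ℝ => a * y ^ (a-1)) (Ioc 0 t) := by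
    have := (intervalIntegral.intervalIntegrable_rpow' (a := 0) (b := t) (r := a - 1)
      (by linarith)).const_mul a
    rwa [intervalIntegrable_iff_integrableOn_Ioc_of_le ht] at this
  rw [← ofReal_integral_eq_lintegral_ofReal hint]
  · congr 1
    rw [← intervalIntegral.integral_of_le ht, intervalIntegral.integral_const_mul,
      integral_rpow (Or.inl (by linarith))]
    rw [Real.zero_rpow (by linarith : a - 1 + 1 ≠ 0)]
    rw [sub_add_cancel, sub_zero]
    field_simp
  · filter_upwards [ae_restrict_mem measurableSet_Ioc] with y hy
    have : (0:ℝ) ≤ y ^ (a-1) := Real.rpow_nonneg hy.1.le _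
    positivity

lemma pw_Iic_neg (a : ℝ) {t : ℝ} (ht : t < 0) : pwMeasure a (Iic t) = 0 := by
  rw [pwMeasure, withDensity_apply _ measurableSet_Iic,
    Measure.restrict_restrict measurableSet_Iic]
  have he : Iic t ∩ Ioc 0 1 = ∅ := by
    ext x; simp only [mem_inter_iff, mem_Iic, mem_Ioc, mem_empty_iff_false, iff_false]
    rintro ⟨h1, h2, _⟩; linarith
  rw [he, Measure.restrict_empty, lintegral_zero_measure]

lemma pw_Iic (a : ℝ) (ha : 0 < a) {t : ℝ} (ht : 0 ≤ t) :
    pwMeasure a (Iic t) = ENNReal.ofReal ((min t 1) ^ a) := by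
  rw [pwMeasure, withDensity_apply _ measurableSet_Iic,
    Measure.restrict_restrict measurableSet_Iic]
  have hset : Iic t ∩ Ioc 0 1 = Ioc 0 (min t 1) := by
    ext x; simp only [mem_inter_iff, mem_Iic, mem_Ioc, lt_min_iff, le_min_iff]
    constructor
    · rintro ⟨h1, h2, h3⟩; exact ⟨h2, h1, h3⟩
    · rintro ⟨h1, h2, h3⟩; exact ⟨h2, h1, h3⟩
  rw [hset, pw_lint a ha (le_min ht zero_le_one)]

lemma pw_prob (a : ℝ) (ha : 0 < a) : IsProbabilityMeasure (pwMeasure a) := by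
  constructor
  rw [pwMeasure, withDensity_apply _ MeasurableSet.univ, Measure.restrict_univ]
  have := pw_lint a ha zero_le_one
  rw [Real.one_rpow, ENNReal.ofReal_one] at this
  exact this






lemma pw_singleton (a : ℝ) (t : ℝ) : pwMeasure a {t} = 0 := by
  rw [pwMeasure, withDensity_apply _ (measurableSet_singleton t)]
  refine setLIntegral_measure_zero _ _ ?_
  rw [Measure.restrict_apply (measurableSet_singleton t)]
  exact measure_mono_null (inter_subset_left) (measure_singleton t)

lemma pw_compl_Ioc (a : ℝ) : pwMeasure a ((Ioc (0:ℝ) 1)ᶜ) = 0 := by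
  rw [pwMeasure, withDensity_apply _ measurableSet_Ioc.compl]
  refine setLIntegral_measure_zero _ _ ?_
  rw [Measure.restrict_apply measurableSet_Ioc.compl, compl_inter_self]
  exact measure_empty

lemma pw_Iio (a : ℝ) (ha : 0 < a) {t : ℝ} (ht : 0 ≤ t) :
    pwMeasure a (Iio t) = ENNReal.ofReal ((min t 1) ^ a) := by
  rw [← Iic_diff_right, measure_diff_null (pw_singleton a t), pw_Iic a ha ht]

lemma pw_map {Ω : Type*} [MeasureSpace Ω] [IsProbabilityMeasure (ℙ : Measure Ω)]
    (a : ℝ) (ha : 0 < a) (v : Ω → ℝ) (h1 : Measurable v)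
    (hr : ∀ ω, v ω ∈ Icc (0:ℝ) 1)
    (hcdf : ∀ t ∈ Icc (0:ℝ) 1, (ℙ {ω | v ω ≤ t}).toReal = t ^ a) :
    Measure.map v ℙ = pwMeasure a := by
  have := pw_prob a ha
  refine MeasureTheory.Measure.ext_of_Iic _ _ (fun t => ?_)
  rw [Measure.map_apply h1 measurableSet_Iic]
  rcases lt_or_ge t 0 with h | h
  · rw [pw_Iic_neg a h]
    convert measure_empty
    · ext ω; simp only [mem_preimage, mem_Iic, mem_empty_iff_false, iff_false, not_le]
      exact lt_of_lt_of_le h (hr ω).1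
    · infer_instance
  rcases le_or_gt t 1 with h2 | h2
  · rw [pw_Iic a ha h, min_eq_left h2]
    have h3 := hcdf t ⟨h, h2⟩
    have h4 : ℙ (v ⁻¹' Iic t) ≠ ⊤ := measure_ne_top _ _
    have h5 : v ⁻¹' Iic t = {ω | v ω ≤ t} := rfl
    rw [h5, ← h3, ENNReal.ofReal_toReal (by rw [← h5]; exact h4)]
  · rw [pw_Iic a ha h, min_eq_right h2.le, Real.one_rpow, ENNReal.ofReal_one]
    have : v ⁻¹' Iic t = univ := by
      ext ω; simp only [mem_preimage, mem_Iic, mem_univ, iff_true]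
      exact le_trans (hr ω).2 h2.le
    rw [this, measure_univ]






lemma pw_Iio_toReal (a : ℝ) (ha : 0 < a) {t : ℝ} (ht : 0 ≤ t) :
    (pwMeasure a (Iio t)).toReal = (min t 1) ^ a := by
  rw [pw_Iio a ha ht, ENNReal.toReal_ofReal (Real.rpow_nonneg (le_min ht zero_le_one) a)]

lemma pw_Ioi_toReal (a : ℝ) (ha : 0 < a) {t : ℝ} (ht : 0 ≤ t) :
    (pwMeasure a (Ioi t)).toReal = 1 - (min t 1) ^ a := by
  haveI := pw_prob a ha
  have h1 : (min t 1 : ℝ) ^ a ≤ 1 :=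
    Real.rpow_le_one (le_min ht zero_le_one) (min_le_right t 1) ha.le
  rw [← compl_Iic, prob_compl_eq_one_sub measurableSet_Iic, pw_Iic a ha ht,
    ENNReal.toReal_sub_of_le (ENNReal.ofReal_le_one.mpr h1) ENNReal.one_ne_top,
    ENNReal.toReal_one, ENNReal.toReal_ofReal (Real.rpow_nonneg (le_min ht zero_le_one) a)]

lemma pw_integral (a : ℝ) (ha : 0 < a) (g : ℝ → ℝ) :
    ∫ y, g y ∂(pwMeasure a) = ∫ y in Ioc (0:ℝ) 1, (a * y ^ (a-1)) * g y := by
  have hm : Measurable (fun y : ℝ => (a * y ^ (a-1)).toNNReal) := by measurability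
  rw [pwMeasure]
  rw [show (fun y : ℝ => ENNReal.ofReal (a * y ^ (a-1)))
      = (fun y : ℝ => ((a * y ^ (a-1)).toNNReal : ℝ≥0∞)) from rfl,
    integral_withDensity_eq_integral_smul hm g]
  refine setIntegral_congr_fun measurableSet_Ioc (fun y hy => ?_)
  have hnn : 0 ≤ a * y ^ (a-1) := by
    have := Real.rpow_nonneg hy.1.le (a-1); positivity
  simp [NNReal.smul_def, Real.coe_toNNReal _ hnn]

section comp
variable {a α β : ℝ} (ha : 0 < a) (hα : 0 < α) (hαβ : α ≤ β)
include ha hα hαβ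

lemma pw_int_earned :
    ∫ x in Ioc (0:ℝ) 1, (a * x ^ (a-1)) * (((pwMeasure a) (Iio (α*x/β))).toReal * x)
      = a * (α/β)^a * (1/(2*a+1)) := by
  have hβ : 0 < β := lt_of_lt_of_le hα hαβ
  have hcong : ∀ x ∈ Ioc (0:ℝ) 1,
      (a * x ^ (a-1)) * (((pwMeasure a) (Iio (α*x/β))).toReal * x)
        = (a * (α/β)^a) * x ^ (2*a) := by
    intro x hx
    have ht0 : 0 ≤ α*x/β := div_nonneg (mul_nonneg hα.le hx.1.le) hβ.le
    have ht1 : α*x/β ≤ 1 := by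
      rw [div_le_one hβ]
      nlinarith [hx.2, hx.1]
    rw [pw_Iio_toReal a ha ht0, min_eq_left ht1]
    have e2 : (α*x/β)^a = (α/β)^a * x^a := by
      rw [show α*x/β = (α/β)*x by ring, Real.mul_rpow (by positivity) hx.1.le]
    have e1 : x^(a-1) * x = x^a := by
      rw [Real.rpow_sub_one hx.1.ne', div_mul_cancel₀ _ hx.1.ne']
    have e3 : x^(2*a) = x^a * x^a := by
      rw [two_mul, Real.rpow_add hx.1]
    rw [e2, e3, ← e1]; ring
  rw [setIntegral_congr_fun measurableSet_Ioc hcong,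
    ← intervalIntegral.integral_of_le zero_le_one, intervalIntegral.integral_const_mul,
    integral_rpow (Or.inl (by linarith)), Real.one_rpow,
    Real.zero_rpow (by linarith : 2*a+1 ≠ 0)]
  ring

lemma pw_int_pay :
    ∫ y in Ioc (0:ℝ) 1, (a * y ^ (a-1)) * (((pwMeasure a) (Ioi (β*y/α))).toReal * (β*y))
      = a*β*((α/β)^(a+1)/(a+1)) - a*β*(β/α)^a*((α/β)^(2*a+1)/(2*a+1)) := by
  have hβ : 0 < β := lt_of_lt_of_le hα hαβ
  have hc : 0 < α/β := by positivity
  have hc1 : α/β ≤ 1 := by rw [div_le_one hβ]; exact hαβ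
  have hcong : ∀ y ∈ Ioc (0:ℝ) 1,
      (a * y ^ (a-1)) * (((pwMeasure a) (Ioi (β*y/α))).toReal * (β*y))
        = (Iic (α/β)).indicator (fun y => a*β*y^a - (a*β*(β/α)^a)*y^(2*a)) y := by
    intro y hy
    have ht0 : 0 ≤ β*y/α := div_nonneg (mul_nonneg hβ.le hy.1.le) hα.le
    rw [pw_Ioi_toReal a ha ht0]
    rcases le_or_gt y (α/β) with hyc | hyc
    · have hyβ : y * β ≤ α := (le_div_iff₀ hβ).mp hyc
      have hle : β*y/α ≤ 1 := by rw [div_le_one hα]; linarith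
      rw [min_eq_left hle]
      simp only [indicator_of_mem (mem_Iic.mpr hyc)]
      have e2 : (β*y/α)^a = (β/α)^a * y^a := by
        rw [show β*y/α = (β/α)*y by ring, Real.mul_rpow (by positivity) hy.1.le]
      have e1 : y^(a-1) * y = y^a := by
        rw [Real.rpow_sub_one hy.1.ne', div_mul_cancel₀ _ hy.1.ne']
      have e3 : y^(2*a) = y^a * y^a := by
        rw [two_mul, Real.rpow_add hy.1]
      rw [e2, e3, ← e1]; ring
    · have hyβ : α < y * β := (div_lt_iff₀ hβ).mp hyc
      have hge : (1:ℝ) ≤ β*y/α := by rw [le_div_iff₀ hα, one_mul]; linarith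
      rw [min_eq_right hge, Real.one_rpow,
        indicator_of_notMem (by simpa using not_le.mpr hyc)]
      simp
  rw [setIntegral_congr_fun measurableSet_Ioc hcong,
    setIntegral_indicator measurableSet_Iic,
    show Ioc (0:ℝ) 1 ∩ Iic (α/β) = Ioc 0 (α/β) by
      rw [Ioc_inter_Iic, min_eq_right hc1],
    ← intervalIntegral.integral_of_le hc.le,
    intervalIntegral.integral_sub
      ((intervalIntegral.intervalIntegrable_rpow' (by linarith : (-1:ℝ) < a)).const_mul _)
      ((intervalIntegral.intervalIntegrable_rpow' (by linarith : (-1:ℝ) < 2*a)).const_mul _),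
    intervalIntegral.integral_const_mul, intervalIntegral.integral_const_mul,
    integral_rpow (Or.inl (by linarith : (-1:ℝ) < a)),
    integral_rpow (Or.inl (by linarith : (-1:ℝ) < 2*a)),
    Real.zero_rpow (by linarith : a+1 ≠ 0), Real.zero_rpow (by linarith : 2*a+1 ≠ 0)]
  ring

lemma pw_final :
    (a*β*((α/β)^(a+1)/(a+1)) - a*β*(β/α)^a*((α/β)^(2*a+1)/(2*a+1)))
      / (a * (α/β)^a * (1/(2*a+1))) = a/(a+1)*α := by
  have hβ : 0 < β := lt_of_lt_of_le hα hαβ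
  have hc : 0 < α/β := by positivity
  have hK : 0 < (α/β)^a := Real.rpow_pos_of_pos hc a
  have h1 : (α/β)^(a+1) = (α/β)^a * (α/β) := by rw [Real.rpow_add hc, Real.rpow_one]
  have h2 : (α/β)^(2*a+1) = (α/β)^a * (α/β)^a * (α/β) := by
    rw [Real.rpow_add hc, Real.rpow_one, two_mul, Real.rpow_add hc]
  have h3 : (β/α)^a = ((α/β)^a)⁻¹ := by
    rw [show β/α = (α/β)⁻¹ by rw [inv_div], Real.inv_rpow hc.le]
  have hβc : β*(α/β) = α := by field_simp
  rw [h1, h2, h3, ← hβc]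
  field_simp
  ring
end comp










/-- **Strategic independence of the CPA in the two-bidder power-law case.**
With two independent values distributed with c.d.f. `F(t) = tᵃ` on `[0,1]`
(`a > 0`), bidder 1 bidding `α·v₁` and bidder 2 bidding `β·v₂`
(`0 < α ≤ β`) in a second price auction, bidder 1's CPA — the ratio
`E[β·v₂·1{α·v₁ > β·v₂}] / E[v₁·1{α·v₁ > β·v₂}]` of expected payment to
expected earned value — equals `(a/(a+1))·α`, independently of `β`. -/
theorem power_law_two_bidders_cpa
    {Ω : Type*} [MeasureSpace Ω] [IsProbabilityMeasure (ℙ : Measure Ω)]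
    (a : ℝ) (ha : 0 < a)
    (v₁ v₂ : Ω → ℝ) (h1 : Measurable v₁) (h2 : Measurable v₂)
    (hindep : IndepFun v₁ v₂ ℙ)
    (hr1 : ∀ ω, v₁ ω ∈ Icc (0:ℝ) 1) (hr2 : ∀ ω, v₂ ω ∈ Icc (0:ℝ) 1)
    (hcdf1 : ∀ t ∈ Icc (0:ℝ) 1, (ℙ {ω | v₁ ω ≤ t}).toReal = t ^ a)
    (hcdf2 : ∀ t ∈ Icc (0:ℝ) 1, (ℙ {ω | v₂ ω ≤ t}).toReal = t ^ a)
    (α β : ℝ) (hα : 0 < α) (hαβ : α ≤ β) :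
    (∫ ω, (if β * v₂ ω < α * v₁ ω then β * v₂ ω else 0) ∂ℙ)
        / (∫ ω, (if β * v₂ ω < α * v₁ ω then v₁ ω else 0) ∂ℙ)
      = (a / (a + 1)) * α := by
  have hβ : 0 < β := lt_of_lt_of_le hα hαβ
  set ν := pwMeasure a with hν
  haveI : IsProbabilityMeasure ν := pw_prob a ha
  have hm1 : Measure.map v₁ ℙ = ν := pw_map a ha v₁ h1 hr1 hcdf1
  have hm2 : Measure.map v₂ ℙ = ν := pw_map a ha v₂ h2 hr2 hcdf2
  have hjoint : Measure.map (fun ω => (v₁ ω, v₂ ω)) ℙ = ν.prod ν := by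
    rw [(indepFun_iff_map_prod_eq_prod_map_map h1.aemeasurable h2.aemeasurable).mp hindep,
      hm1, hm2]
  have hS : MeasurableSet {p : ℝ × ℝ | β * p.2 < α * p.1} :=
    measurableSet_lt (measurable_snd.const_mul β) (measurable_fst.const_mul α)
  have mfP : Measurable (fun p : ℝ × ℝ => if β * p.2 < α * p.1 then β * p.2 else 0) :=
    Measurable.ite hS (measurable_snd.const_mul β) measurable_const
  have mfE : Measurable (fun p : ℝ × ℝ => if β * p.2 < α * p.1 then p.1 else 0) :=
    Measurable.ite hS measurable_fst measurable_const
  -- a.e. support of product measure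
  have hae : ∀ᵐ p ∂(ν.prod ν), p.1 ∈ Ioc (0:ℝ) 1 ∧ p.2 ∈ Ioc (0:ℝ) 1 := by
    have hz1 : (ν.prod ν) ((Ioc (0:ℝ) 1)ᶜ ×ˢ (univ : Set ℝ)) = 0 := by
      rw [Measure.prod_prod, pw_compl_Ioc, zero_mul]
    have hz2 : (ν.prod ν) ((univ : Set ℝ) ×ˢ (Ioc (0:ℝ) 1)ᶜ) = 0 := by
      rw [Measure.prod_prod, pw_compl_Ioc, mul_zero]
    have h1' := measure_eq_zero_iff_ae_notMem.mp hz1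
    have h2' := measure_eq_zero_iff_ae_notMem.mp hz2
    filter_upwards [h1', h2'] with p hp1 hp2
    constructor
    · by_contra h; exact hp1 ⟨h, mem_univ _⟩
    · by_contra h; exact hp2 ⟨mem_univ _, h⟩
  have hintP : Integrable (fun p : ℝ × ℝ => if β * p.2 < α * p.1 then β * p.2 else 0)
      (ν.prod ν) := by
    refine Integrable.mono' (integrable_const β) mfP.aestronglyMeasurable ?_
    filter_upwards [hae] with p hp
    rw [Real.norm_eq_abs]
    split_ifs
    · rw [abs_of_nonneg (mul_nonneg hβ.le hp.2.1.le)]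
      nlinarith [hp.2.1, hp.2.2]
    · simpa using hβ.le
  have hintE : Integrable (fun p : ℝ × ℝ => if β * p.2 < α * p.1 then p.1 else 0)
      (ν.prod ν) := by
    refine Integrable.mono' (integrable_const 1) mfE.aestronglyMeasurable ?_
    filter_upwards [hae] with p hp
    rw [Real.norm_eq_abs]
    split_ifs
    · rw [abs_of_nonneg hp.1.1.le]; exact hp.1.2
    · simp
  have keyP : (∫ ω, (if β * v₂ ω < α * v₁ ω then β * v₂ ω else 0) ∂ℙ)
      = ∫ p : ℝ × ℝ, (if β * p.2 < α * p.1 then β * p.2 else 0) ∂(ν.prod ν) := by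
    rw [← hjoint, integral_map (h1.prodMk h2).aemeasurable mfP.aestronglyMeasurable]
  have keyE : (∫ ω, (if β * v₂ ω < α * v₁ ω then v₁ ω else 0) ∂ℙ)
      = ∫ p : ℝ × ℝ, (if β * p.2 < α * p.1 then p.1 else 0) ∂(ν.prod ν) := by
    rw [← hjoint, integral_map (h1.prodMk h2).aemeasurable mfE.aestronglyMeasurable]
  -- inner integrals
  have hinnerP : ∀ y : ℝ, (∫ x, (if β * y < α * x then β * y else 0) ∂ν)
      = (ν (Ioi (β*y/α))).toReal * (β*y) := by
    intro y
    have : (fun x : ℝ => if β * y < α * x then β * y else 0)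
        = (Ioi (β*y/α)).indicator (fun _ => β*y) := by
      funext x
      simp only [indicator_apply, mem_Ioi]
      exact if_congr (by rw [div_lt_iff₀ hα, mul_comm x α]) rfl rfl
    rw [this, integral_indicator measurableSet_Ioi, setIntegral_const, smul_eq_mul, measureReal_def]
  have hinnerE : ∀ x : ℝ, (∫ y, (if β * y < α * x then x else 0) ∂ν)
      = (ν (Iio (α*x/β))).toReal * x := by
    intro x
    have : (fun y : ℝ => if β * y < α * x then x else 0)
        = (Iio (α*x/β)).indicator (fun _ => x) := by
      funext y
      simp only [indicator_apply, mem_Iio]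
      exact if_congr (by rw [lt_div_iff₀ hβ, mul_comm y β]) rfl rfl
    rw [this, integral_indicator measurableSet_Iio, setIntegral_const, smul_eq_mul, measureReal_def]
  rw [keyP, keyE, integral_prod_symm _ hintP, integral_prod _ hintE]
  have eP : (∫ y, ∫ x, (if β * y < α * x then β * y else 0) ∂ν ∂ν)
      = a*β*((α/β)^(a+1)/(a+1)) - a*β*(β/α)^a*((α/β)^(2*a+1)/(2*a+1)) := by
    rw [integral_congr_ae (Filter.Eventually.of_forall hinnerP), pw_integral a ha,
      pw_int_pay ha hα hαβ]
  have eE : (∫ x, ∫ y, (if β * y < α * x then x else 0) ∂ν ∂ν)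
      = a * (α/β)^a * (1/(2*a+1)) := by
    rw [integral_congr_ae (Filter.Eventually.of_forall hinnerE), pw_integral a ha,
      pw_int_earned ha hα hαβ]
  rw [eP, eE, pw_final ha hα hαβ]
end
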